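/- arXiv:1706.03300 — 4 statements merged into one kernel-verified Lean document; each statement's English description precedes it below -/
import Mathlib

section
/- For every natural number n ≥ 1 and every real number x, the n-dimensional Lebesgue measure of the set {(x_1,…,x_n) ∈ [0,1)^n : x_1 + ⋯ + x_n ≤ x} equals U_n(x) := (1/n!) · Σ_{i=0}^{n} (-1)^i · C(n,i) · max(x − i, 0)^n. -/
open MeasureTheory Finset


lemma hasDerivAt_maxpow (k : ℕ) (c t : ℝ) :
    HasDerivAt (fun s : ℝ => max (s - c) 0 ^ (k + 2)) ((k + 2) * max (t - c) 0 ^ (k + 1)) t := by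
  rcases lt_trichotomy t c with h | h | h
  · have h0 : max (t - c) 0 = 0 := max_eq_right (by linarith)
    rw [h0, zero_pow (Nat.succ_ne_zero k), mul_zero]
    refine (hasDerivAt_const t (0:ℝ)).congr_of_eventuallyEq ?_
    filter_upwards [Iio_mem_nhds h] with s hs
    have : s - c ≤ 0 := by simp only [Set.mem_Iio] at hs; linarith
    simp [max_eq_right this, zero_pow]
  · subst h
    have h0 : max (t - t) 0 = 0 := by simp
    rw [h0, zero_pow (Nat.succ_ne_zero k), mul_zero]
    rw [hasDerivAt_iff_isLittleO]
    rw [Asymptotics.isLittleO_iff]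
    intro ε hε
    filter_upwards [Metric.ball_mem_nhds t (lt_min hε one_pos)] with s hs
    rw [Metric.mem_ball, Real.dist_eq] at hs
    have h1 : |s - t| ≤ ε := le_of_lt (lt_of_lt_of_le hs (min_le_left _ _))
    have h2 : |s - t| ≤ 1 := le_of_lt (lt_of_lt_of_le hs (min_le_right _ _))
    have hm : max (s - t) 0 ≤ |s - t| := max_le (le_abs_self _) (abs_nonneg _)
    have hmn : (0:ℝ) ≤ max (s - t) 0 := le_max_right _ _
    have key : max (s - t) 0 ^ (k + 2) ≤ ε * |s - t| := by
      calc max (s - t) 0 ^ (k + 2) ≤ |s - t| ^ (k + 2) := pow_le_pow_left₀ hmn hm _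
        _ = |s - t| ^ (k + 1) * |s - t| := by ring
        _ ≤ ε * |s - t| := by
            apply mul_le_mul_of_nonneg_right _ (abs_nonneg _)
            calc |s - t| ^ (k+1) ≤ |s - t| := pow_le_of_le_one (abs_nonneg _) h2 (Nat.succ_ne_zero k)
              _ ≤ ε := h1
    simp only [sub_zero, smul_zero, sub_zero]
    rw [Real.norm_eq_abs, Real.norm_eq_abs]
    have hz : ((t - t) ⊔ 0 : ℝ) ^ (k+2) = 0 := by simp [zero_pow]
    rw [hz, sub_zero, abs_of_nonneg (by positivity : (0:ℝ) ≤ max (s - t) 0 ^ (k+2))]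
    exact key
  · have h0 : max (t - c) 0 = t - c := max_eq_left (by linarith)
    rw [h0]
    have hd : HasDerivAt (fun s : ℝ => (s - c) ^ (k+2)) ((k+2) * (t - c)^(k+1)) t := by
      simpa using ((hasDerivAt_id t).sub_const c).fun_pow (k+2)
    refine hd.congr_of_eventuallyEq ?_
    filter_upwards [Ioi_mem_nhds h] with s hs
    have : (0:ℝ) ≤ s - c := by simp only [Set.mem_Ioi] at hs; linarith
    simp [max_eq_left this]

lemma pascal_sum (n : ℕ) (a : ℕ → ℝ) :
    ∑ i ∈ range (n + 2), (-1:ℝ)^i * ((n+1).choose i : ℝ) * a i =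
      ∑ i ∈ range (n + 1), (-1:ℝ)^i * (n.choose i : ℝ) * a i
        - ∑ i ∈ range (n + 1), (-1:ℝ)^i * (n.choose i : ℝ) * a (i+1) := by
  rw [Finset.sum_range_succ' (fun i => (-1:ℝ)^i * ((n+1).choose i : ℝ) * a i) (n+1)]
  have step : ∀ k ∈ range (n+1),
      (-1:ℝ)^(k+1) * ((n+1).choose (k+1) : ℝ) * a (k+1)
        = ((-1:ℝ)^(k+1) * (n.choose k : ℝ) * a (k+1)
          + (-1:ℝ)^(k+1) * (n.choose (k+1) : ℝ) * a (k+1)) := by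
    intro k _
    rw [Nat.choose_succ_succ]
    push_cast
    ring
  rw [Finset.sum_congr rfl step, Finset.sum_add_distrib]
  have h2 : ∑ k ∈ range (n+1), (-1:ℝ)^(k+1) * (n.choose (k+1) : ℝ) * a (k+1)
      = ∑ k ∈ range n, (-1:ℝ)^(k+1) * (n.choose (k+1) : ℝ) * a (k+1) := by
    rw [Finset.sum_range_succ]
    simp
  have h3 : ∑ i ∈ range (n + 1), (-1:ℝ)^i * (n.choose i : ℝ) * a i
      = ∑ k ∈ range n, (-1:ℝ)^(k+1) * (n.choose (k+1) : ℝ) * a (k+1)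
        + (-1:ℝ)^0 * (n.choose 0 : ℝ) * a 0 :=
    Finset.sum_range_succ' (fun i => (-1:ℝ)^i * (n.choose i : ℝ) * a i) n
  have h4 : ∑ k ∈ range (n+1), (-1:ℝ)^(k+1) * (n.choose k : ℝ) * a (k+1)
      = - ∑ i ∈ range (n+1), (-1:ℝ)^i * (n.choose i : ℝ) * a (i+1) := by
    rw [← Finset.sum_neg_distrib]
    exact Finset.sum_congr rfl fun k _ => by ring
  rw [h2, h3, h4]
  simp [Nat.choose_zero_right]
  ring

noncomputable def U (n : ℕ) (x : ℝ) : ℝ :=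
  (1 / (n.factorial : ℝ)) *
    ∑ i ∈ Finset.range (n + 1), (-1 : ℝ) ^ i * (n.choose i : ℝ) * max (x - (i : ℝ)) 0 ^ n

lemma continuous_U (n : ℕ) : Continuous (U n) := by
  unfold U
  exact continuous_const.mul (continuous_finset_sum _ fun i _ =>
    continuous_const.mul (((continuous_id.sub continuous_const).max continuous_const).pow n))

noncomputable def H (n : ℕ) (t : ℝ) : ℝ :=
  (1 / ((n+1).factorial : ℝ)) *
    ∑ i ∈ Finset.range (n + 1), (-1 : ℝ) ^ i * (n.choose i : ℝ) * max (t - (i : ℝ)) 0 ^ (n+1)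

lemma hasDerivAt_H (k : ℕ) (t : ℝ) : HasDerivAt (H (k+1)) (U (k+1) t) t := by
  have hsum : HasDerivAt
      (fun s => ∑ i ∈ Finset.range (k + 2),
        (-1 : ℝ) ^ i * ((k+1).choose i : ℝ) * max (s - (i : ℝ)) 0 ^ (k+2))
      (∑ i ∈ Finset.range (k + 2),
        (-1 : ℝ) ^ i * ((k+1).choose i : ℝ) * ((k+2) * max (t - (i : ℝ)) 0 ^ (k+1))) t := by
    apply HasDerivAt.fun_sum
    intro i _
    exact (hasDerivAt_maxpow k (i:ℝ) t).const_mul _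
  have := hsum.const_mul (1 / ((k+2).factorial : ℝ))
  refine this.congr_deriv (Eq.symm ?_)
  unfold U
  rw [Finset.mul_sum, Finset.mul_sum]
  apply Finset.sum_congr rfl
  intro i _
  have h1 : ((k+2).factorial : ℝ) = (k+2) * ((k+1).factorial : ℝ) := by
    rw [Nat.factorial_succ]; push_cast; ring
  have h2 : ((k+1).factorial : ℝ) ≠ 0 := Nat.cast_ne_zero.mpr (Nat.factorial_ne_zero _)
  have h3 : ((k:ℝ)+2) ≠ 0 := by positivity
  rw [h1]
  field_simp [h1]
lemma H_diff (n : ℕ) (x : ℝ) : H n x - H n (x - 1) = U (n+1) x := by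
  unfold U H
  rw [pascal_sum n (fun i => max (x - (i:ℝ)) 0 ^ (n+1))]
  rw [mul_sub]
  congr 2
  apply Finset.sum_congr rfl
  intro i _
  have : x - 1 - (i:ℝ) = x - ((i:ℕ)+1 : ℕ) := by push_cast; ring
  rw [this]

-- base case
lemma base (x : ℝ) :
    volume {y : Fin 1 → ℝ | (∀ i, 0 ≤ y i ∧ y i < 1) ∧ ∑ i, y i ≤ x}
      = ENNReal.ofReal (U 1 x) := by
  have hU : U 1 x = max x 0 - max (x - 1) 0 := by
    unfold U
    simp [Finset.sum_range_succ]
    ring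
  have e := MeasureTheory.volume_preserving_funUnique (Fin 1) ℝ
  set A : Set (Fin 1 → ℝ) := {y | (∀ i, 0 ≤ y i ∧ y i < 1) ∧ ∑ i, y i ≤ x} with hA
  have hpre : A = (MeasurableEquiv.funUnique (Fin 1) ℝ) ⁻¹' (Set.Ico 0 1 ∩ Set.Iic x) := by
    ext y
    simp [hA, MeasurableEquiv.funUnique, Fin.forall_fin_one, Set.mem_Ico, and_assoc]
  rw [hpre]; refine (e.measure_preimage (s := Set.Ico (0:ℝ) 1 ∩ Set.Iic x) ((measurableSet_Ico.inter measurableSet_Iic).nullMeasurableSet)).trans ?_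
  rcases le_or_gt 1 x with h1 | h1
  · have : Set.Ico (0:ℝ) 1 ∩ Set.Iic x = Set.Ico 0 1 := by
      apply Set.inter_eq_left.mpr
      intro t ht
      exact le_trans ht.2.le h1
    rw [this, Real.volume_Ico, hU, max_eq_left (by linarith), max_eq_left (by linarith)]
    norm_num
  · rcases le_or_gt 0 x with h0 | h0
    · have : Set.Ico (0:ℝ) 1 ∩ Set.Iic x = Set.Icc 0 x := by
        ext t
        simp only [Set.mem_inter_iff, Set.mem_Ico, Set.mem_Iic, Set.mem_Icc]
        constructor
        · rintro ⟨⟨a, _⟩, c⟩; exact ⟨a, c⟩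
        · rintro ⟨a, b⟩; exact ⟨⟨a, lt_of_le_of_lt b h1⟩, b⟩
      rw [this, Real.volume_Icc, hU, max_eq_left h0, max_eq_right (by linarith)]
    · have : Set.Ico (0:ℝ) 1 ∩ Set.Iic x = ∅ := by
        ext t
        simp only [Set.mem_inter_iff, Set.mem_Ico, Set.mem_Iic, Set.mem_empty_iff_false, iff_false]
        rintro ⟨⟨a, _⟩, c⟩; linarith
      rw [this, hU, max_eq_right h0.le, max_eq_right (by linarith)]
      simp
lemma measB (n : ℕ) (x : ℝ) :
    MeasurableSet {p : ℝ × (Fin n → ℝ) |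
      (0 ≤ p.1 ∧ p.1 < 1) ∧ (∀ i, 0 ≤ p.2 i ∧ p.2 i < 1) ∧ p.1 + ∑ i, p.2 i ≤ x} := by
  have h : {p : ℝ × (Fin n → ℝ) |
      (0 ≤ p.1 ∧ p.1 < 1) ∧ (∀ i, 0 ≤ p.2 i ∧ p.2 i < 1) ∧ p.1 + ∑ i, p.2 i ≤ x}
      = (Prod.fst ⁻¹' Set.Ico (0:ℝ) 1)
        ∩ ((⋂ i, (fun p : ℝ × (Fin n → ℝ) => p.2 i) ⁻¹' Set.Ico (0:ℝ) 1)
          ∩ {p | p.1 + ∑ i, p.2 i ≤ x}) := by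
    ext p; simp [Set.mem_Ico, forall_and, and_assoc]
  rw [h]
  exact (measurable_fst measurableSet_Ico).inter
    ((MeasurableSet.iInter fun i => ((measurable_pi_apply i).comp measurable_snd) measurableSet_Ico).inter
      (measurableSet_le (measurable_fst.add
        (Finset.measurable_sum _ fun i _ => (measurable_pi_apply i).comp measurable_snd))
        measurable_const))
lemma step (n : ℕ) (hn : 1 ≤ n)
    (IH : ∀ x : ℝ, 0 ≤ U n x ∧
      volume {y : Fin n → ℝ | (∀ i, 0 ≤ y i ∧ y i < 1) ∧ ∑ i, y i ≤ x} = ENNReal.ofReal (U n x))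
    (x : ℝ) :
    0 ≤ U (n+1) x ∧
      volume {y : Fin (n+1) → ℝ | (∀ i, 0 ≤ y i ∧ y i < 1) ∧ ∑ i, y i ≤ x}
        = ENNReal.ofReal (U (n+1) x) := by
  -- the key integral identity
  have key : ∫ t in (x-1)..x, U n t = U (n+1) x := by
    obtain ⟨k, rfl⟩ : ∃ k, n = k + 1 := ⟨n - 1, by omega⟩
    rw [intervalIntegral.integral_eq_sub_of_hasDerivAt
      (fun t _ => hasDerivAt_H k t) ((continuous_U (k+1)).intervalIntegrable _ _)]
    exact H_diff (k+1) x
  have hnn : 0 ≤ U (n+1) x := by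
    rw [← key]
    exact intervalIntegral.integral_nonneg (by linarith) (fun t _ => (IH t).1)
  refine ⟨hnn, ?_⟩
  set B : Set (ℝ × (Fin n → ℝ)) := {p | (0 ≤ p.1 ∧ p.1 < 1) ∧ (∀ i, 0 ≤ p.2 i ∧ p.2 i < 1)
    ∧ p.1 + ∑ i, p.2 i ≤ x} with hB
  have hA_pre : {y : Fin (n+1) → ℝ | (∀ i, 0 ≤ y i ∧ y i < 1) ∧ ∑ i, y i ≤ x}
      = (MeasurableEquiv.piFinSuccAbove (fun _ : Fin (n+1) => ℝ) 0) ⁻¹' B := by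
    ext y
    simp only [Set.mem_setOf_eq, Set.mem_preimage, MeasurableEquiv.piFinSuccAbove_apply, hB,
      Fin.forall_fin_succ, Fin.sum_univ_succ, Fin.succAbove_zero]
    tauto
  rw [hA_pre,
    (volume_preserving_piFinSuccAbove (fun _ : Fin (n+1) => ℝ) 0).measure_preimage
      (measB n x).nullMeasurableSet]
  rw [MeasureTheory.Measure.volume_eq_prod, Measure.prod_apply (measB n x)]
  have hslice : (fun t => volume (Prod.mk t ⁻¹' B))
      = (Set.Ico (0:ℝ) 1).indicator (fun t => ENNReal.ofReal (U n (x - t))) := by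
    funext t
    by_cases ht : t ∈ Set.Ico (0:ℝ) 1
    · rw [Set.indicator_of_mem ht]
      rw [Set.mem_Ico] at ht
      have hpre : Prod.mk t ⁻¹' B
          = {z : Fin n → ℝ | (∀ i, 0 ≤ z i ∧ z i < 1) ∧ ∑ i, z i ≤ x - t} := by
        ext z
        simp only [Set.mem_preimage, hB, Set.mem_setOf_eq]
        constructor
        · rintro ⟨_, h2, h3⟩; exact ⟨h2, by linarith⟩
        · rintro ⟨h2, h3⟩; exact ⟨ht, h2, by linarith⟩
      rw [hpre, (IH (x - t)).2]
    · rw [Set.indicator_of_notMem ht]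
      have hpre : Prod.mk t ⁻¹' B = ∅ := by
        ext z
        simp only [Set.mem_preimage, hB, Set.mem_setOf_eq, Set.mem_empty_iff_false, iff_false]
        rintro ⟨h1, _⟩
        exact ht (Set.mem_Ico.mpr h1)
      rw [hpre]
      simp
  rw [hslice, lintegral_indicator measurableSet_Ico]
  have hInt2 : IntegrableOn (fun t => U n (x - t)) (Set.Ico (0:ℝ) 1) :=
    (((continuous_U n).comp (continuous_const.sub continuous_id)).integrableOn_Icc).mono_set
      Set.Ico_subset_Icc_self
  rw [← ofReal_integral_eq_lintegral_ofReal hInt2 (ae_of_all _ fun t => (IH (x - t)).1)]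
  congr 1
  rw [integral_Ico_eq_integral_Ioo, ← integral_Ioc_eq_integral_Ioo,
    ← intervalIntegral.integral_of_le zero_le_one,
    intervalIntegral.integral_comp_sub_left (fun s => U n s) x]
  rw [← key]
  norm_num

lemma main_lemma (n : ℕ) (hn : 1 ≤ n) : ∀ x : ℝ, 0 ≤ U n x ∧
    volume {y : Fin n → ℝ | (∀ i, 0 ≤ y i ∧ y i < 1) ∧ ∑ i, y i ≤ x} = ENNReal.ofReal (U n x) := by
  induction n, hn using Nat.le_induction with
  | base =>
    intro x
    refine ⟨?_, base x⟩
    have h1 : U 1 x = max x 0 - max (x - 1) 0 := by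
      unfold U
      simp [Finset.sum_range_succ]
      ring
    have h2 : max (x - 1) 0 ≤ max x 0 := max_le_max (by linarith) le_rfl
    linarith
  | succ n hn IH => exact step n hn IH

/-- For every natural number `n ≥ 1` and every real `x`, the Lebesgue measure
of `{(x_1,…,x_n) ∈ [0,1)^n : x_1 + ⋯ + x_n ≤ x}` equals
`U_n(x) = (1/n!) · Σ_{i=0}^{n} (-1)^i C(n,i) max(x − i, 0)^n`. -/
theorem statement0 (n : ℕ) (hn : 1 ≤ n) (x : ℝ) :
    volume {y : Fin n → ℝ | (∀ i, 0 ≤ y i ∧ y i < 1) ∧ ∑ i, y i ≤ x} =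
      ENNReal.ofReal ((1 / (n.factorial : ℝ)) *
        ∑ i ∈ Finset.range (n + 1),
          (-1 : ℝ) ^ i * (n.choose i : ℝ) * max (x - (i : ℝ)) 0 ^ n) := by
  exact (main_lemma n hn x).2
end

section
/- Let n ≥ 2 and 0 ≤ a < 1, and let E_a := {(x_1,…,x_n) ∈ [0,1)^n : x_n ≤ a}. Then the (n−1)-dimensional Hausdorff measure of E_a ∩ D̂_n equals W_a times the (n−1)-dimensional Hausdorff measure of D̂_n, where W_a := (1/(n−1)!) · Σ over pairs of integers (i,k) with 0 ≤ i ≤ n and max(i·a, 1) ≤ k ≤ n−1 of (−1)^i · C(n,i) · (k − i·a)^{n−1}. -/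
open MeasureTheory Finset
open scoped NNReal ENNReal

/-- The set `D̂_n`: points of `[0,1)^n` with increasingly sorted coordinates whose sum is
an integer, as a subset of Euclidean space. -/
def Dhat (n : ℕ) : Set (EuclideanSpace ℝ (Fin n)) :=
  {x | (∀ i, 0 ≤ x i ∧ x i < 1) ∧ (∀ i j : Fin n, i ≤ j → x i ≤ x j) ∧
    ∃ m : ℤ, ∑ i, x i = (m : ℝ)}

/-- `W_a = (1/(n−1)!) · Σ_{(i,k) ∈ ℤ², 0 ≤ i ≤ n, max(i·a, 1) ≤ k ≤ n−1}
(−1)^i C(n,i) (k − i·a)^{n−1}`. -/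
noncomputable def Wexp (n : ℕ) (a : ℝ) : ℝ :=
  (1 / ((n - 1).factorial : ℝ)) *
    ∑ i ∈ Finset.Icc (0 : ℤ) (n : ℤ),
      ∑ k ∈ (Finset.Icc (1 : ℤ) ((n : ℤ) - 1)).filter (fun k : ℤ => (i : ℝ) * a ≤ (k : ℝ)),
        (-1 : ℝ) ^ i * (n.choose i.toNat : ℝ) * ((k : ℝ) - (i : ℝ) * a) ^ (n - 1)

lemma phi_def' : True := trivial

namespace St2


lemma pascal_regroup (m : ℕ) (h : ℕ → ℝ) :
    ∑ i ∈ range (m+1), (-1:ℝ)^i * (m.choose i) * (h i - h (i+1))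
      = ∑ i ∈ range (m+2), (-1:ℝ)^i * ((m+1).choose i) * h i := by
  have expand : ∀ i, (-1:ℝ)^i * (m.choose i) * (h i - h (i+1))
      = (-1:ℝ)^i * (m.choose i) * h i - (-1:ℝ)^i * (m.choose i) * h (i+1) := by
    intro i; ring
  rw [Finset.sum_congr rfl (fun i _ => expand i), Finset.sum_sub_distrib]
  rw [Finset.sum_range_succ' (fun i => (-1:ℝ)^i * ((m+1).choose i) * h i) (m+1)]
  -- RHS = ∑_{i<m+1} (-1)^(i+1) C(m+1,i+1) h(i+1) + h 0
  have h1 : ∑ i ∈ range (m+1), (-1:ℝ)^i * (m.choose i) * h i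
      = (∑ i ∈ range m, (-1:ℝ)^(i+1) * (m.choose (i+1)) * h (i+1)) + h 0 := by
    rw [Finset.sum_range_succ' (fun i => (-1:ℝ)^i * (m.choose i) * h i) m]
    simp
  have h2 : ∑ i ∈ range m, (-1:ℝ)^(i+1) * (m.choose (i+1)) * h (i+1)
      = ∑ i ∈ range (m+1), (-1:ℝ)^(i+1) * (m.choose (i+1)) * h (i+1) := by
    rw [Finset.sum_range_succ]
    simp [Nat.choose_succ_self]
  rw [h1, h2]
  have h3 : ∀ i ∈ range (m+1),
      (-1:ℝ)^(i+1) * ((m+1).choose (i+1)) * h (i+1)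
        = (-1:ℝ)^(i+1) * (m.choose (i+1)) * h (i+1) - (-1:ℝ)^i * (m.choose i) * h (i+1) := by
    intro i _
    rw [Nat.choose_succ_succ m i]
    push_cast
    ring
  rw [Finset.sum_congr rfl h3, Finset.sum_sub_distrib]
  simp [Nat.choose_zero_right]
  ring

lemma hasDerivAt_maxpow (m : ℕ) (hm : 1 ≤ m) (t : ℝ) :
    HasDerivAt (fun u : ℝ => max u 0 ^ (m+1)) ((m+1) * max t 0 ^ m) t := by
  rcases lt_trichotomy t 0 with ht | rfl | ht
  · have : (fun u : ℝ => max u 0 ^ (m+1)) =ᶠ[nhds t] fun _ => 0 := by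
      filter_upwards [eventually_lt_nhds ht] with u hu
      simp [max_eq_right hu.le, zero_pow (Nat.succ_ne_zero m)]
    rw [this.hasDerivAt_iff]
    simpa [max_eq_right ht.le, zero_pow (by omega : m ≠ 0)] using (hasDerivAt_const t (0:ℝ))
  · -- derivative 0 at 0
    have h0 : (m+1 : ℝ) * max (0:ℝ) 0 ^ m = 0 := by simp [zero_pow (by omega : m ≠ 0)]
    rw [h0, hasDerivAt_iff_isLittleO]
    have hb : (fun u : ℝ => max u 0 ^ (m+1) - max (0:ℝ) 0 ^ (m+1) - (u - 0) • (0:ℝ))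
        = fun u : ℝ => max u 0 ^ (m+1) := by funext u; simp [zero_pow (Nat.succ_ne_zero m)]
    rw [hb]
    have h1 : (fun u : ℝ => u ^ (m+1)) =o[nhds 0] fun u : ℝ => u ^ 1 := by
      simpa using (Asymptotics.isLittleO_pow_pow (by omega : 1 < m + 1)
        (𝕜 := ℝ))
    have h2 : (fun u : ℝ => max u 0 ^ (m+1)) =O[nhds 0] fun u : ℝ => u ^ (m+1) := by
      apply Asymptotics.IsBigO.of_bound 1
      filter_upwards with u
      simp only [one_mul, Real.norm_eq_abs, abs_pow]
      have hle : |max u 0| ≤ |u| := by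
        rcases le_total u 0 with h | h
        · simp [max_eq_right h, abs_nonneg]
        · simp [max_eq_left h]
      exact pow_le_pow_left₀ (abs_nonneg _) hle _
    simpa using h2.trans_isLittleO h1
  · have : (fun u : ℝ => max u 0 ^ (m+1)) =ᶠ[nhds t] fun u => u ^ (m+1) := by
      filter_upwards [eventually_gt_nhds ht] with u hu
      simp [max_eq_left hu.le]
    rw [this.hasDerivAt_iff]
    rw [max_eq_left ht.le]
    simpa using (hasDerivAt_pow (m+1) t)

lemma integral_maxpow (m : ℕ) (hm : 1 ≤ m) (a t : ℝ) :
    ∫ z in (0:ℝ)..a, max (t - z) 0 ^ m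
      = (max t 0 ^ (m+1) - max (t-a) 0 ^ (m+1)) / (m+1) := by
  rw [intervalIntegral.integral_comp_sub_left (fun u => max u 0 ^ m) t]
  have key : ∫ u in (t-a)..(t-0), ((m:ℝ)+1) * max u 0 ^ m
      = max (t-0) 0 ^ (m+1) - max (t-a) 0 ^ (m+1) := by
    apply intervalIntegral.integral_eq_sub_of_hasDerivAt (f := fun u : ℝ => max u 0 ^ (m+1))
    · intro x _
      exact_mod_cast hasDerivAt_maxpow m hm x
    · apply Continuous.intervalIntegrable
      continuity
  have h2 : ∫ u in (t-a)..(t-0), ((m:ℝ)+1) * max u 0 ^ m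
      = ((m:ℝ)+1) * ∫ u in (t-a)..(t-0), max u 0 ^ m := by
    exact intervalIntegral.integral_const_mul _ _
  rw [h2] at key
  have hm1 : ((m:ℝ)+1) ≠ 0 := by positivity
  field_simp
  rw [mul_comm]
  simp only [sub_zero] at key ⊢
  rw [key]



/-- The explicit formula for the volume of a cut cube. -/
noncomputable def Phi (a : ℝ) (m : ℕ) (t : ℝ) : ℝ :=
  (1 / (m.factorial : ℝ)) *
    ∑ i ∈ range (m+1), (-1:ℝ)^i * (m.choose i) * max (t - i*a) 0 ^ m

lemma continuous_phi (a : ℝ) (m : ℕ) : Continuous (Phi a m) := by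
  apply Continuous.mul continuous_const
  apply continuous_finset_sum
  intro i _
  exact Continuous.mul continuous_const (((continuous_id.sub continuous_const).max
    continuous_const).pow m)

lemma phi_rec (a : ℝ) (m : ℕ) (hm : 1 ≤ m) (t : ℝ) :
    ∫ z in (0:ℝ)..a, Phi a m (t - z) = Phi a (m+1) t := by
  unfold Phi
  rw [intervalIntegral.integral_const_mul]
  rw [intervalIntegral.integral_finset_sum]
  swap
  · intro i _
    apply Continuous.intervalIntegrable
    fun_prop
  have step : ∀ i ∈ range (m+1),
      ∫ z in (0:ℝ)..a, (-1:ℝ)^i * (m.choose i) * max (t - z - i*a) 0 ^ m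
        = (-1:ℝ)^i * (m.choose i) *
            ((max (t - i*a) 0 ^ (m+1) - max (t - (i+1)*a) 0 ^ (m+1)) / (m+1)) := by
    intro i _
    rw [intervalIntegral.integral_const_mul]
    congr 1
    have : ∀ z : ℝ, t - z - i*a = (t - i*a) - z := by intro z; ring
    simp_rw [this]
    rw [integral_maxpow m hm a (t - i*a)]
    congr 3
    ring
  rw [Finset.sum_congr rfl step]
  have expand : ∀ i ∈ range (m+1),
      (-1:ℝ)^i * (m.choose i) * ((max (t - i*a) 0 ^ (m+1) - max (t - (i+1)*a) 0 ^ (m+1)) / (m+1))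
      = (1/((m:ℝ)+1)) * ((-1:ℝ)^i * (m.choose i) *
          ((fun j : ℕ => max (t - j*a) 0 ^ (m+1)) i - (fun j : ℕ => max (t - j*a) 0 ^ (m+1)) (i+1))) := by
    intro i _
    push_cast
    ring
  rw [Finset.sum_congr rfl expand, ← Finset.mul_sum,
    pascal_regroup m (fun j : ℕ => max (t - j*a) 0 ^ (m+1))]
  have hr : m + 1 + 1 = m + 2 := by omega
  rw [hr, Nat.factorial_succ]
  have h1 : (m.factorial : ℝ) ≠ 0 := Nat.cast_ne_zero.mpr (Nat.factorial_ne_zero m)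
  have h2 : ((m:ℝ) + 1) ≠ 0 := by positivity
  push_cast
  rw [← mul_assoc]
  congr 1
  field_simp

lemma phi_nonneg (a : ℝ) (ha : 0 ≤ a) (m : ℕ) (hm : 1 ≤ m) (t : ℝ) : 0 ≤ Phi a m t := by
  induction m, hm using Nat.le_induction generalizing t with
  | base =>
    have : Phi a 1 t = max t 0 - max (t - a) 0 := by
      unfold Phi
      simp [Finset.sum_range_succ]
      ring
    rw [this, sub_nonneg]
    exact max_le_max (by linarith) le_rfl
  | succ m hm ih =>
    rw [← phi_rec a m hm t]
    apply intervalIntegral.integral_nonneg ha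
    intro z _
    exact ih _

lemma phi_one (a : ℝ) (ha : 0 ≤ a) (t : ℝ) : Phi a 1 t = max (min a t) 0 := by
  unfold Phi
  simp only [Finset.sum_range_succ, Finset.sum_range_zero]
  norm_num
  rcases le_total t 0 with h | h
  · rw [max_eq_right h, max_eq_right (by linarith), max_eq_right (min_le_of_right_le h)]
    ring
  · rcases le_total t a with h2 | h2
    · rw [max_eq_left h, max_eq_right (by linarith), min_eq_right h2, max_eq_left h]
      ring
    · rw [max_eq_left h, max_eq_left (by linarith), min_eq_left h2, max_eq_left (by linarith)]
      ring

/-- Volume of the cut cube `{y ∈ [0,a]^m : ∑ y ≤ t}`. -/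
lemma volume_cut_cube (a : ℝ) (ha : 0 ≤ a) (m : ℕ) (hm : 1 ≤ m) (t : ℝ) :
    volume {y : Fin m → ℝ | (∀ i, y i ∈ Set.Icc 0 a) ∧ ∑ i, y i ≤ t}
      = ENNReal.ofReal (Phi a m t) := by
  induction m, hm using Nat.le_induction generalizing t with
  | base =>
    rw [phi_one a ha]
    have e := (MeasureTheory.volume_preserving_funUnique (Fin 1) ℝ)
    have hs : {y : Fin 1 → ℝ | (∀ i, y i ∈ Set.Icc 0 a) ∧ ∑ i, y i ≤ t}
        = (MeasurableEquiv.funUnique (Fin 1) ℝ) ⁻¹' (Set.Icc 0 (min a t)) := by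
      ext y
      simp only [Set.mem_setOf_eq, Set.mem_preimage, MeasurableEquiv.funUnique_apply,
        Set.mem_Icc, Fin.forall_fin_one, Fin.sum_univ_one, Set.mem_Icc, le_min_iff]
      constructor
      · rintro ⟨⟨h1, h2⟩, h3⟩; exact ⟨h1, h2, h3⟩
      · rintro ⟨h1, h2, h3⟩; exact ⟨⟨h1, h2⟩, h3⟩
    rw [hs, show volume (⇑(MeasurableEquiv.funUnique (Fin 1) ℝ) ⁻¹' Set.Icc (0:ℝ) (min a t)) = volume (Set.Icc (0:ℝ) (min a t)) from e.measure_preimage (measurableSet_Icc (a := (0:ℝ)) (b := min a t)).nullMeasurableSet]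
    rw [Real.volume_Icc]
    rcases le_or_gt 0 (min a t) with h | h
    · congr 1
      rw [max_eq_left h]; ring
    · rw [max_eq_right h.le]
      rw [ENNReal.ofReal_eq_zero.mpr (by linarith : a ⊓ t - 0 ≤ 0)]
      simp
  | succ m hm ih =>
    set e := MeasurableEquiv.piFinSuccAbove (fun _ : Fin (m+1) => ℝ) 0 with he
    have hmp : MeasurePreserving e volume (volume.prod volume) :=
      volume_preserving_piFinSuccAbove (fun _ : Fin (m+1) => ℝ) 0
    have he' : ∀ y : Fin (m+1) → ℝ, e y = (y 0, fun j : Fin m => y j.succ) := by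
      intro y
      simp only [he, MeasurableEquiv.piFinSuccAbove, MeasurableEquiv.coe_mk,
        Equiv.symm_symm]
      show ((Fin.insertNthEquiv (fun _ => ℝ) 0).symm y) = _
      rfl
    set B : Set (ℝ × (Fin m → ℝ)) :=
      ((Set.Icc (0:ℝ) a) ×ˢ (Set.univ.pi fun _ : Fin m => Set.Icc (0:ℝ) a)) ∩
        {p | p.1 + ∑ i, p.2 i ≤ t} with hB
    have hBmem : ∀ p : ℝ × (Fin m → ℝ), p ∈ B ↔
        (p.1 ∈ Set.Icc (0:ℝ) a ∧ ∀ i, p.2 i ∈ Set.Icc (0:ℝ) a) ∧ p.1 + ∑ i, p.2 i ≤ t := by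
      intro p
      simp only [hB, Set.mem_inter_iff, Set.mem_prod, Set.mem_pi, Set.mem_univ, true_implies,
        Set.mem_setOf_eq]
    have hBmeas : MeasurableSet B := by
      refine MeasurableSet.inter ?_ ?_
      · exact measurableSet_Icc.prod (MeasurableSet.univ_pi fun _ => measurableSet_Icc)
      · exact measurableSet_le
          (measurable_fst.add (Finset.measurable_sum Finset.univ
            (fun i _ => (measurable_pi_apply i).comp measurable_snd))) measurable_const
    have hpre : {y : Fin (m+1) → ℝ | (∀ i, y i ∈ Set.Icc 0 a) ∧ ∑ i, y i ≤ t} = e ⁻¹' B := by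
      ext y
      rw [Set.mem_preimage, hBmem, he']
      simp only [Set.mem_setOf_eq]
      constructor
      · rintro ⟨h1, h2⟩
        exact ⟨⟨h1 0, fun i => h1 _⟩, by rw [← Fin.sum_univ_succ y]; exact h2⟩
      · rintro ⟨⟨h0, h1⟩, h2⟩
        refine ⟨fun i => Fin.cases h0 h1 i, ?_⟩
        rw [Fin.sum_univ_succ y]
        exact h2
    rw [hpre, hmp.measure_preimage hBmeas.nullMeasurableSet]
    rw [Measure.prod_apply hBmeas]
    have hsec : ∀ z : ℝ, volume (Prod.mk z ⁻¹' B)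
        = Set.indicator (Set.Icc 0 a) (fun z => ENNReal.ofReal (Phi a m (t - z))) z := by
      intro z
      rcases Classical.em (z ∈ Set.Icc (0:ℝ) a) with hz | hz
      · rw [Set.indicator_of_mem hz]
        have hset : Prod.mk z ⁻¹' B
            = {y : Fin m → ℝ | (∀ i, y i ∈ Set.Icc 0 a) ∧ ∑ i, y i ≤ t - z} := by
          ext y
          rw [Set.mem_preimage, hBmem]
          simp only [Set.mem_setOf_eq]
          constructor
          · rintro ⟨⟨_, h1⟩, h2⟩; exact ⟨h1, by linarith⟩
          · rintro ⟨h1, h2⟩; exact ⟨⟨hz, h1⟩, by linarith⟩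
        rw [hset, ih]
      · rw [Set.indicator_of_notMem hz]
        have hset : Prod.mk z ⁻¹' B = ∅ := by
          ext y
          rw [Set.mem_preimage, hBmem]
          simp only [Set.mem_empty_iff_false, iff_false]
          rintro ⟨⟨h0, _⟩, _⟩
          exact hz h0
        rw [hset]
        simp
    rw [lintegral_congr hsec, lintegral_indicator measurableSet_Icc]
    have hint : IntegrableOn (fun z => Phi a m (t - z)) (Set.Icc 0 a) volume :=
      (Continuous.continuousOn ((continuous_phi a m).comp (by fun_prop))).integrableOn_compact
        isCompact_Icc
    rw [← ofReal_integral_eq_lintegral_ofReal hint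
      (Filter.Eventually.of_forall (fun z => phi_nonneg a ha m hm _))]
    congr 1
    rw [← phi_rec a m hm t]
    rw [MeasureTheory.integral_Icc_eq_integral_Ioc,
      ← intervalIntegral.integral_of_le ha]


lemma phi_def (a : ℝ) (m : ℕ) (t : ℝ) : Phi a m t
      = (1 / (m.factorial : ℝ)) *
        ∑ i ∈ range (m+1), (-1:ℝ)^i * (m.choose i) * max (t - i*a) 0 ^ m := rfl


variable (m : ℕ)

/-- The linear parametrization of the hyperplane `∑ x = 0` by the first `m` coordinates. -/
noncomputable def Lmap : (Fin m → ℝ) →ₗ[ℝ] EuclideanSpace ℝ (Fin (m+1)) where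
  toFun y := (WithLp.equiv 2 (Fin (m+1) → ℝ)).symm (Fin.snoc y (-(∑ i, y i)))
  map_add' y z := by
    ext i
    refine Fin.lastCases ?_ ?_ i
    · simp [Fin.snoc_last, Finset.sum_add_distrib]
      ring
    · intro j
      simp [Fin.snoc_castSucc]
  map_smul' r y := by
    ext i
    refine Fin.lastCases ?_ ?_ i
    · simp [Fin.snoc_last, Finset.mul_sum]
    · intro j
      simp [Fin.snoc_castSucc]

lemma Lmap_castSucc (y : Fin m → ℝ) (j : Fin m) : Lmap m y j.castSucc = y j := by
  simp [Lmap, Fin.snoc_castSucc]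

lemma Lmap_last (y : Fin m → ℝ) : Lmap m y (Fin.last m) = -(∑ i, y i) := by
  simp [Lmap, Fin.snoc_last]

lemma Lmap_inj : Function.Injective (Lmap m) := by
  intro y z h
  funext j
  have := congrArg (fun x : EuclideanSpace ℝ (Fin (m+1)) => x j.castSucc) h
  simpa [Lmap_castSucc] using this

lemma Lmap_closedEmbedding : Topology.IsClosedEmbedding (Lmap m) :=
  LinearMap.isClosedEmbedding_of_injective (LinearMap.ker_eq_bot.mpr (Lmap_inj m))

lemma Lmap_measurableEmbedding : MeasurableEmbedding (Lmap m) :=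
  (Lmap_closedEmbedding m).measurableEmbedding

/-- Pullback of Hausdorff measure under `Lmap`. -/
noncomputable def nu : Measure (Fin m → ℝ) :=
  Measure.comap (Lmap m) μH[(m:ℝ)]

lemma nu_apply (s : Set (Fin m → ℝ)) : nu m s = μH[(m:ℝ)] (Lmap m '' s) :=
  (Lmap_measurableEmbedding m).comap_apply _ _

lemma hausdorff_translate (v : EuclideanSpace ℝ (Fin (m+1))) (t : Set (EuclideanSpace ℝ (Fin (m+1)))) :
    μH[(m:ℝ)] ((fun x => v + x) '' t) = μH[(m:ℝ)] t := by
  have := IsometryEquiv.hausdorffMeasure_image (IsometryEquiv.addLeft v) (m:ℝ) t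
  simpa using this

instance nu_addLeftInvariant : (nu m).IsAddLeftInvariant := by
  constructor
  intro g
  ext s hs
  rw [Measure.map_apply (measurable_const_add g) hs, nu_apply, nu_apply]
  have himg : Lmap m '' ((g + ·) ⁻¹' s) = (fun x => -(Lmap m g) + x) '' (Lmap m '' s) := by
    ext x
    simp only [Set.mem_image, Set.mem_preimage]
    constructor
    · rintro ⟨y, hy, rfl⟩
      exact ⟨Lmap m (g + y), ⟨g + y, hy, rfl⟩, by rw [map_add]; abel⟩
    · rintro ⟨w, ⟨u, hu, rfl⟩, rfl⟩
      refine ⟨u - g, by simpa using hu, by rw [map_sub]; abel⟩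
  rw [himg, hausdorff_translate]

instance nu_finiteOnCompacts : IsFiniteMeasureOnCompacts (nu m) := by
  constructor
  intro K hK
  rw [nu_apply]
  set Lc : (Fin m → ℝ) →L[ℝ] EuclideanSpace ℝ (Fin (m+1)) :=
    { toLinearMap := Lmap m, cont := (Lmap m).continuous_of_finiteDimensional }
  have hLip : LipschitzWith ‖Lc‖₊ (Lmap m) := Lc.lipschitz
  calc μH[(m:ℝ)] (Lmap m '' K) ≤ (‖Lc‖₊ : ℝ≥0∞) ^ (m:ℝ) * μH[(m:ℝ)] K :=
        hLip.hausdorffMeasure_image_le (by positivity) K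
    _ < ⊤ := by
        apply ENNReal.mul_lt_top
        · exact ENNReal.rpow_lt_top_of_nonneg (by positivity) ENNReal.coe_ne_top
        · have hpi : (μH[(m:ℝ)] : Measure (Fin m → ℝ)) = volume := by
            have := (MeasureTheory.hausdorffMeasure_pi_real (ι := Fin m))
            simpa using this
          rw [hpi]
          exact hK.measure_lt_top

/-- The scaling factor relating the pulled-back Hausdorff measure and Lebesgue measure. -/
noncomputable def cfac : ℝ≥0 := Measure.addHaarScalarFactor (nu m) volume

lemma nu_eq_smul : nu m = (cfac m : ℝ≥0∞) • volume := by
  have := Measure.isAddLeftInvariant_eq_smul (nu m) volume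
  rw [this]
  rfl

lemma key_measure (v : EuclideanSpace ℝ (Fin (m+1))) (s : Set (Fin m → ℝ)) :
    μH[(m:ℝ)] ((fun y => v + Lmap m y) '' s) = (cfac m : ℝ≥0∞) * volume s := by
  have h1 : (fun y => v + Lmap m y) '' s = (fun x => v + x) '' (Lmap m '' s) := by
    rw [Set.image_image]
  rw [h1, hausdorff_translate, ← nu_apply, nu_eq_smul]
  simp



variable (m : ℕ)

noncomputable def vK (k : ℤ) : EuclideanSpace ℝ (Fin (m+1)) :=
  (WithLp.equiv 2 (Fin (m+1) → ℝ)).symm (Fin.snoc 0 (k:ℝ))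

noncomputable def psi (k : ℤ) : (Fin m → ℝ) → EuclideanSpace ℝ (Fin (m+1)) :=
  fun y => vK m k + Lmap m y

lemma psi_castSucc (k : ℤ) (y : Fin m → ℝ) (j : Fin m) : psi m k y j.castSucc = y j := by
  have : psi m k y j.castSucc = vK m k j.castSucc + Lmap m y j.castSucc := rfl
  rw [this, Lmap_castSucc]
  have hv : vK m k j.castSucc = 0 := by simp [vK]
  rw [hv]; ring

lemma psi_last (k : ℤ) (y : Fin m → ℝ) : psi m k y (Fin.last m) = (k:ℝ) - ∑ i, y i := by
  have : psi m k y (Fin.last m) = vK m k (Fin.last m) + Lmap m y (Fin.last m) := rfl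
  rw [this, Lmap_last]
  have hv : vK m k (Fin.last m) = (k:ℝ) := by
    simp [vK]
  rw [hv]; ring

lemma sum_psi (k : ℤ) (y : Fin m → ℝ) : ∑ i, psi m k y i = (k:ℝ) := by
  rw [Fin.sum_univ_castSucc (f := fun i => psi m k y i)]
  simp only [psi_castSucc, psi_last]
  ring

lemma psi_closedEmbedding (k : ℤ) : Topology.IsClosedEmbedding (psi m k) :=
  (Homeomorph.addLeft (vK m k)).isClosedEmbedding.comp (Lmap_closedEmbedding m)

lemma psi_measurableEmbedding (k : ℤ) : MeasurableEmbedding (psi m k) :=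
  (psi_closedEmbedding m k).measurableEmbedding

lemma psi_measure (k : ℤ) (s : Set (Fin m → ℝ)) :
    μH[(m:ℝ)] (psi m k '' s) = (cfac m : ℝ≥0∞) * volume s :=
  key_measure m _ s

/-- The symmetric version of `Dhat`: no sortedness condition. -/
def SymS : Set (EuclideanSpace ℝ (Fin (m+1))) :=
  {x | (∀ i, 0 ≤ x i ∧ x i < 1) ∧ ∃ z : ℤ, ∑ i, x i = (z:ℝ)}

def SymSa (a : ℝ) : Set (EuclideanSpace ℝ (Fin (m+1))) :=
  {x ∈ SymS m | ∀ i, x i ≤ a}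

def Abase (k : ℤ) : Set (Fin m → ℝ) :=
  {y | (∀ i, 0 ≤ y i ∧ y i < 1) ∧ (k:ℝ) - 1 < ∑ i, y i ∧ ∑ i, y i ≤ (k:ℝ)}

def Abasea (a : ℝ) (k : ℤ) : Set (Fin m → ℝ) :=
  {y | (∀ i, 0 ≤ y i ∧ y i ≤ a) ∧ (k:ℝ) - a ≤ ∑ i, y i ∧ ∑ i, y i ≤ (k:ℝ)}

lemma measurable_Abase (k : ℤ) : MeasurableSet (Abase m k) := by
  have : Abase m k = (⋂ i, (fun y : Fin m → ℝ => y i) ⁻¹' (Set.Ico (0:ℝ) 1)) ∩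
      ((fun y : Fin m → ℝ => ∑ i, y i) ⁻¹' (Set.Ioc ((k:ℝ)-1) k)) := by
    ext y
    simp only [Abase, Set.mem_setOf_eq, Set.mem_inter_iff, Set.mem_iInter, Set.mem_preimage,
      Set.mem_Ico, Set.mem_Ioc]
  rw [this]
  exact MeasurableSet.inter
    (MeasurableSet.iInter fun i => (measurable_pi_apply i) measurableSet_Ico)
    ((Finset.measurable_sum Finset.univ fun i _ => measurable_pi_apply i) measurableSet_Ioc)

lemma measurable_Abasea (a : ℝ) (k : ℤ) : MeasurableSet (Abasea m a k) := by
  have : Abasea m a k = (⋂ i, (fun y : Fin m → ℝ => y i) ⁻¹' (Set.Icc (0:ℝ) a)) ∩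
      ((fun y : Fin m → ℝ => ∑ i, y i) ⁻¹' (Set.Icc ((k:ℝ)-a) k)) := by
    ext y
    simp only [Abasea, Set.mem_setOf_eq, Set.mem_inter_iff, Set.mem_iInter, Set.mem_preimage,
      Set.mem_Icc]
  rw [this]
  exact MeasurableSet.inter
    (MeasurableSet.iInter fun i => (measurable_pi_apply i) measurableSet_Icc)
    ((Finset.measurable_sum Finset.univ fun i _ => measurable_pi_apply i) measurableSet_Icc)

lemma SymS_decomp (hm : 1 ≤ m) :
    SymS m = ⋃ k ∈ Finset.Icc (0:ℤ) (m:ℤ), psi m k '' Abase m k := by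
  ext x
  simp only [Set.mem_iUnion, Set.mem_image, exists_prop, Finset.mem_Icc]
  constructor
  · rintro ⟨hb, z, hz⟩
    have hsum : ∑ i, x i = ∑ j : Fin m, x j.castSucc + x (Fin.last m) :=
      Fin.sum_univ_castSucc (f := fun i => x i)
    refine ⟨z, ⟨?_, ?_⟩, (fun j : Fin m => x j.castSucc), ⟨?_, ?_, ?_⟩, ?_⟩
    · have h0 : (0:ℝ) ≤ ∑ i, x i := Finset.sum_nonneg fun i _ => (hb i).1
      rw [hz] at h0
      exact_mod_cast h0
    · have hlt : ∑ i, x i < (m:ℝ) + 1 := by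
        calc ∑ i, x i < ∑ _i : Fin (m+1), (1:ℝ) :=
              Finset.sum_lt_sum_of_nonempty Finset.univ_nonempty (fun i _ => (hb i).2)
          _ = (m:ℝ) + 1 := by simp
      rw [hz] at hlt
      have hzlt : z < (m:ℤ) + 1 := by exact_mod_cast hlt
      omega
    · intro j
      exact ⟨(hb j.castSucc).1, (hb j.castSucc).2⟩
    · have := (hb (Fin.last m)).2
      have hx : x (Fin.last m) = (z:ℝ) - ∑ j : Fin m, x j.castSucc := by
        rw [← hz, hsum]; ring
      rw [hx] at this
      linarith
    · have := (hb (Fin.last m)).1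
      have hx : x (Fin.last m) = (z:ℝ) - ∑ j : Fin m, x j.castSucc := by
        rw [← hz, hsum]; ring
      rw [hx] at this
      linarith
    · ext i
      refine Fin.lastCases ?_ ?_ i
      · rw [psi_last]
        rw [← hz, hsum]; ring
      · intro j
        rw [psi_castSucc]
  · rintro ⟨k, ⟨hk0, hk1⟩, y, ⟨hyb, hys1, hys2⟩, rfl⟩
    constructor
    · intro i
      refine Fin.lastCases ?_ ?_ i
      · rw [psi_last]
        constructor <;> [linarith; linarith]
      · intro j
        rw [psi_castSucc]
        exact ⟨(hyb j).1, (hyb j).2⟩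
    · exact ⟨k, sum_psi m k y⟩

lemma SymSa_decomp (hm : 1 ≤ m) (a : ℝ) (ha0 : 0 ≤ a) (ha1 : a < 1) :
    SymSa m a = ⋃ k ∈ Finset.Icc (0:ℤ) (m:ℤ), psi m k '' Abasea m a k := by
  ext x
  simp only [Set.mem_iUnion, Set.mem_image, exists_prop, Finset.mem_Icc, SymSa,
    Set.mem_setOf_eq]
  constructor
  · rintro ⟨⟨hb, z, hz⟩, hle⟩
    have hsum : ∑ i, x i = ∑ j : Fin m, x j.castSucc + x (Fin.last m) :=
      Fin.sum_univ_castSucc (f := fun i => x i)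
    have hx : x (Fin.last m) = (z:ℝ) - ∑ j : Fin m, x j.castSucc := by
      rw [← hz, hsum]; ring
    refine ⟨z, ⟨?_, ?_⟩, (fun j : Fin m => x j.castSucc), ⟨?_, ?_, ?_⟩, ?_⟩
    · have h0 : (0:ℝ) ≤ ∑ i, x i := Finset.sum_nonneg fun i _ => (hb i).1
      rw [hz] at h0
      exact_mod_cast h0
    · have hlt : ∑ i, x i < (m:ℝ) + 1 := by
        calc ∑ i, x i < ∑ _i : Fin (m+1), (1:ℝ) :=
              Finset.sum_lt_sum_of_nonempty Finset.univ_nonempty (fun i _ => (hb i).2)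
          _ = (m:ℝ) + 1 := by simp
      rw [hz] at hlt
      have hzlt : z < (m:ℤ) + 1 := by exact_mod_cast hlt
      omega
    · intro j
      exact ⟨(hb j.castSucc).1, hle j.castSucc⟩
    · have := hle (Fin.last m)
      rw [hx] at this
      linarith
    · have := (hb (Fin.last m)).1
      rw [hx] at this
      linarith
    · ext i
      refine Fin.lastCases ?_ ?_ i
      · rw [psi_last]
        rw [← hz, hsum]; ring
      · intro j
        rw [psi_castSucc]
  · rintro ⟨k, ⟨hk0, hk1⟩, y, ⟨hyb, hys1, hys2⟩, rfl⟩
    refine ⟨⟨?_, ⟨k, sum_psi m k y⟩⟩, ?_⟩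
    · intro i
      refine Fin.lastCases ?_ ?_ i
      · rw [psi_last]
        constructor <;> [linarith; linarith]
      · intro j
        rw [psi_castSucc]
        exact ⟨(hyb j).1, lt_of_le_of_lt (hyb j).2 ha1⟩
    · intro i
      refine Fin.lastCases ?_ ?_ i
      · rw [psi_last]; linarith
      · intro j
        rw [psi_castSucc]
        exact (hyb j).2

lemma null_hyperplane (hm : 1 ≤ m) (r : ℝ) :
    volume {y : Fin m → ℝ | ∑ i, y i = r} = 0 := by
  classical
  set f : (Fin m → ℝ) →ₗ[ℝ] ℝ :=
    { toFun := fun y => ∑ i, y i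
      map_add' := fun y z => Finset.sum_add_distrib
      map_smul' := fun c y => by simp [Finset.mul_sum] } with hfdef
  have hker : LinearMap.ker f ≠ ⊤ := by
    intro h
    have h1 : f (fun _ => 1) = 0 := by
      have : (fun _ : Fin m => (1:ℝ)) ∈ LinearMap.ker f := h ▸ Submodule.mem_top
      simpa using this
    have h2 : (m:ℝ) = 0 := by
      simpa [hfdef, Finset.sum_const] using h1
    have : m = 0 := by exact_mod_cast h2
    omega
  rcases Classical.em (∃ y₀ : Fin m → ℝ, ∑ i, y₀ i = r) with ⟨y₀, hy₀⟩ | hno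
  · have hset : {y : Fin m → ℝ | ∑ i, y i = r}
        = (fun z => -y₀ + z) ⁻¹' (LinearMap.ker f : Set (Fin m → ℝ)) := by
      ext y
      simp only [Set.mem_setOf_eq, Set.mem_preimage, SetLike.mem_coe, LinearMap.mem_ker]
      have hfy : f (-y₀ + y) = (∑ i, y i) - (∑ i, y₀ i) := by
        have : f (-y₀ + y) = f y - f y₀ := by
          rw [show -y₀ + y = y - y₀ by abel, map_sub]
        rw [this]; rfl
      rw [hfy, hy₀]
      constructor
      · intro h; rw [h]; ring
      · intro h; linarith
    rw [hset, measure_preimage_add]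
    exact Measure.addHaar_submodule volume _ hker
  · have : {y : Fin m → ℝ | ∑ i, y i = r} = ∅ := by
      ext y
      simp only [Set.mem_setOf_eq, Set.mem_empty_iff_false, iff_false]
      exact fun h => hno ⟨y, h⟩
    rw [this]
    simp

lemma psi_image_disjoint {k k' : ℤ} (hkk : k ≠ k') (s s' : Set (Fin m → ℝ)) :
    Disjoint (psi m k '' s) (psi m k' '' s') := by
  rw [Set.disjoint_left]
  rintro x ⟨y, _, rfl⟩ ⟨y', _, hx⟩
  apply hkk
  have h1 : ∑ i, psi m k y i = (k:ℝ) := sum_psi m k y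
  have h2 : ∑ i, psi m k' y' i = (k':ℝ) := sum_psi m k' y'
  rw [hx] at h2
  rw [h1] at h2
  exact_mod_cast h2

lemma box_partition (hm : 1 ≤ m) :
    ⋃ k ∈ Finset.Icc (0:ℤ) (m:ℤ), Abase m k = {y : Fin m → ℝ | ∀ i, 0 ≤ y i ∧ y i < 1} := by
  ext y
  simp only [Set.mem_iUnion, exists_prop, Finset.mem_Icc, Abase, Set.mem_setOf_eq]
  constructor
  · rintro ⟨k, _, hb, _⟩
    exact hb
  · intro hb
    have h0 : (0:ℝ) ≤ ∑ i, y i := Finset.sum_nonneg fun i _ => (hb i).1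
    have hlt : ∑ i, y i < (m:ℝ) := by
      have hne : (Finset.univ : Finset (Fin m)).Nonempty := by
        haveI : Nonempty (Fin m) := Fin.pos_iff_nonempty.mp (by omega)
        exact Finset.univ_nonempty
      calc ∑ i, y i < ∑ _i : Fin m, (1:ℝ) :=
            Finset.sum_lt_sum_of_nonempty hne (fun i _ => (hb i).2)
        _ = (m:ℝ) := by simp
    refine ⟨⌈∑ i, y i⌉, ⟨Int.ceil_nonneg h0, Int.ceil_le.mpr hlt.le⟩, hb, ?_, Int.le_ceil _⟩
    have := Int.ceil_lt_add_one (∑ i, y i)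
    linarith

lemma vol_box : volume {y : Fin m → ℝ | ∀ i, 0 ≤ y i ∧ y i < 1} = 1 := by
  have : {y : Fin m → ℝ | ∀ i, 0 ≤ y i ∧ y i < 1}
      = Set.pi Set.univ (fun _ : Fin m => Set.Ico (0:ℝ) 1) := by
    ext y
    simp [Set.mem_pi]
  rw [this, volume_pi_pi]
  simp

lemma Abase_pairwise_disjoint :
    Set.PairwiseDisjoint ↑(Finset.Icc (0:ℤ) (m:ℤ)) (Abase m) := by
  intro k _ k' _ hkk
  rw [Function.onFun, Set.disjoint_left]
  rintro y ⟨_, hy1, hy2⟩ ⟨_, hy1', hy2'⟩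
  apply hkk
  have : (k:ℝ) - 1 < (k':ℝ) := lt_of_lt_of_le hy1 hy2'
  have : (k':ℝ) - 1 < (k:ℝ) := lt_of_lt_of_le hy1' hy2
  have hkk1 : (k:ℤ) < k' + 1 := by exact_mod_cast (by linarith : (k:ℝ) < (k':ℝ) + 1)
  have hkk2 : (k':ℤ) < k + 1 := by exact_mod_cast (by linarith : (k':ℝ) < (k:ℝ) + 1)
  omega

lemma measure_SymS (hm : 1 ≤ m) : μH[(m:ℝ)] (SymS m) = (cfac m : ℝ≥0∞) := by
  rw [SymS_decomp m hm]
  rw [measure_biUnion_finset]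
  rotate_left
  · intro k _ k' _ hkk
    exact psi_image_disjoint m hkk _ _
  · intro k _
    exact (psi_measurableEmbedding m k).measurableSet_image' (measurable_Abase m k)
  have : ∀ k ∈ Finset.Icc (0:ℤ) (m:ℤ),
      μH[(m:ℝ)] (psi m k '' Abase m k) = (cfac m : ℝ≥0∞) * volume (Abase m k) :=
    fun k _ => psi_measure m k _
  rw [Finset.sum_congr rfl this, ← Finset.mul_sum]
  rw [← measure_biUnion_finset (Abase_pairwise_disjoint m) (fun k _ => measurable_Abase m k)]
  rw [box_partition m hm, vol_box]
  rw [mul_one]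

lemma phi_mono (a : ℝ) (ha : 0 ≤ a) (hm : 1 ≤ m) {s t : ℝ} (hst : s ≤ t) :
    Phi a m s ≤ Phi a m t := by
  have h1 := volume_cut_cube a ha m hm s
  have h2 := volume_cut_cube a ha m hm t
  have hsub : {y : Fin m → ℝ | (∀ i, y i ∈ Set.Icc 0 a) ∧ ∑ i, y i ≤ s}
      ⊆ {y : Fin m → ℝ | (∀ i, y i ∈ Set.Icc 0 a) ∧ ∑ i, y i ≤ t} :=
    fun y ⟨hb, hs⟩ => ⟨hb, le_trans hs hst⟩
  have := measure_mono (μ := volume) hsub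
  rw [h1, h2] at this
  rwa [ENNReal.ofReal_le_ofReal_iff (phi_nonneg a ha m hm t)] at this

lemma vol_Abasea (hm : 1 ≤ m) (a : ℝ) (ha0 : 0 ≤ a) (k : ℤ) :
    volume (Abasea m a k) = ENNReal.ofReal (Phi a m k - Phi a m ((k:ℝ) - a)) := by
  classical
  set C1 : Set (Fin m → ℝ) := {y | (∀ i, y i ∈ Set.Icc 0 a) ∧ ∑ i, y i ≤ (k:ℝ)} with hC1
  set D1 : Set (Fin m → ℝ) := {y | (∀ i, y i ∈ Set.Icc 0 a) ∧ ∑ i, y i < (k:ℝ) - a} with hD1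
  have hsplit : C1 = D1 ∪ Abasea m a k := by
    ext y
    simp only [hC1, hD1, Set.mem_union, Set.mem_setOf_eq, Abasea, Set.mem_Icc]
    constructor
    · rintro ⟨hb, hs⟩
      rcases lt_or_ge (∑ i, y i) ((k:ℝ) - a) with h | h
      · exact Or.inl ⟨hb, h⟩
      · exact Or.inr ⟨fun i => hb i, h, hs⟩
    · rintro (⟨hb, hs⟩ | ⟨hb, hs1, hs2⟩)
      · refine ⟨hb, le_trans hs.le (by linarith)⟩
      · exact ⟨fun i => hb i, hs2⟩
  have hdisj : Disjoint D1 (Abasea m a k) := by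
    rw [Set.disjoint_left]
    rintro y ⟨_, hy⟩ ⟨_, hy1, _⟩
    linarith
  have hD1meas : MeasurableSet D1 := by
    have : D1 = (⋂ i, (fun y : Fin m → ℝ => y i) ⁻¹' (Set.Icc (0:ℝ) a)) ∩
        ((fun y : Fin m → ℝ => ∑ i, y i) ⁻¹' (Set.Iio ((k:ℝ)-a))) := by
      ext y
      simp only [hD1, Set.mem_setOf_eq, Set.mem_inter_iff, Set.mem_iInter, Set.mem_preimage,
        Set.mem_Iio]
    rw [this]
    exact MeasurableSet.inter
      (MeasurableSet.iInter fun i => (measurable_pi_apply i) measurableSet_Icc)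
      ((Finset.measurable_sum Finset.univ fun i _ => measurable_pi_apply i) measurableSet_Iio)
  have hvolC1 : volume C1 = ENNReal.ofReal (Phi a m k) := volume_cut_cube a ha0 m hm _
  have hvolD1 : volume D1 = ENNReal.ofReal (Phi a m ((k:ℝ) - a)) := by
    have hC2 : volume {y : Fin m → ℝ | (∀ i, y i ∈ Set.Icc 0 a) ∧ ∑ i, y i ≤ (k:ℝ) - a}
        = ENNReal.ofReal (Phi a m ((k:ℝ) - a)) := volume_cut_cube a ha0 m hm _
    have hsub : D1 ⊆ {y : Fin m → ℝ | (∀ i, y i ∈ Set.Icc 0 a) ∧ ∑ i, y i ≤ (k:ℝ) - a} :=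
      fun y ⟨hb, hs⟩ => ⟨hb, hs.le⟩
    have hdiff : {y : Fin m → ℝ | (∀ i, y i ∈ Set.Icc 0 a) ∧ ∑ i, y i ≤ (k:ℝ) - a} \ D1
        ⊆ {y : Fin m → ℝ | ∑ i, y i = (k:ℝ) - a} := by
      rintro y ⟨⟨_, hs⟩, hy⟩
      simp only [hD1, Set.mem_setOf_eq, not_and, not_lt] at hy
      have := hy (by assumption)
      exact le_antisymm hs this
    have h0 : volume ({y : Fin m → ℝ | (∀ i, y i ∈ Set.Icc 0 a) ∧ ∑ i, y i ≤ (k:ℝ) - a} \ D1) = 0 :=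
      measure_mono_null hdiff (null_hyperplane m hm _)
    rw [← hC2]
    exact measure_eq_measure_of_null_diff hsub h0
  have hadd : volume C1 = volume D1 + volume (Abasea m a k) := by
    rw [hsplit]
    exact measure_union hdisj (measurable_Abasea m a k)
  rw [hvolC1, hvolD1] at hadd
  have hfin : ENNReal.ofReal (Phi a m ((k:ℝ) - a)) ≠ ⊤ := ENNReal.ofReal_ne_top
  have hq : volume (Abasea m a k)
      = ENNReal.ofReal (Phi a m k) - ENNReal.ofReal (Phi a m ((k:ℝ) - a)) := by
    rw [hadd, ENNReal.add_sub_cancel_left hfin]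
  rw [hq, ENNReal.ofReal_sub _ (phi_nonneg a ha0 m hm _)]

lemma measure_SymSa (hm : 1 ≤ m) (a : ℝ) (ha0 : 0 ≤ a) (ha1 : a < 1) :
    μH[(m:ℝ)] (SymSa m a) = (cfac m : ℝ≥0∞) *
      ENNReal.ofReal (∑ k ∈ Finset.Icc (0:ℤ) (m:ℤ), (Phi a m k - Phi a m ((k:ℝ)-a))) := by
  rw [SymSa_decomp m hm a ha0 ha1]
  rw [measure_biUnion_finset]
  rotate_left
  · intro k _ k' _ hkk
    exact psi_image_disjoint m hkk _ _
  · intro k _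
    exact (psi_measurableEmbedding m k).measurableSet_image' (measurable_Abasea m a k)
  have h1 : ∀ k ∈ Finset.Icc (0:ℤ) (m:ℤ),
      μH[(m:ℝ)] (psi m k '' Abasea m a k)
        = (cfac m : ℝ≥0∞) * ENNReal.ofReal (Phi a m k - Phi a m ((k:ℝ)-a)) := by
    intro k _
    rw [psi_measure, vol_Abasea m hm a ha0 k]
  rw [Finset.sum_congr rfl h1, ← Finset.mul_sum]
  congr 1
  rw [← ENNReal.ofReal_sum_of_nonneg]
  intro k _
  rw [sub_nonneg]
  exact phi_mono m a ha0 hm (by linarith)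

lemma sum_phi_eq_Wexp (hm : 1 ≤ m) (a : ℝ) (ha0 : 0 ≤ a) :
    ∑ k ∈ Finset.Icc (0:ℤ) (m:ℤ), (Phi a m k - Phi a m ((k:ℝ)-a)) = Wexp (m+1) a := by
  have hm0 : m ≠ 0 := by omega
  -- Step 1: rewrite each difference using Pascal's rule
  have step1 : ∀ k : ℤ, Phi a m k - Phi a m ((k:ℝ)-a)
      = (1 / (m.factorial : ℝ)) *
          ∑ i ∈ range (m+2), (-1:ℝ)^i * ((m+1).choose i) * max ((k:ℝ) - i*a) 0 ^ m := by
    intro k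
    set h : ℕ → ℝ := fun i => max ((k:ℝ) - i*a) 0 ^ m with hh
    have e1 : Phi a m ((k:ℝ)-a)
        = (1 / (m.factorial : ℝ)) * ∑ i ∈ range (m+1), (-1:ℝ)^i * (m.choose i) * h (i+1) := by
      rw [phi_def]
      congr 1
      apply Finset.sum_congr rfl
      intro i _
      have harg : (k:ℝ) - a - i*a = (k:ℝ) - ((i+1:ℕ):ℝ)*a := by push_cast; ring
      simp only [hh, harg]
    have e2 : Phi a m (k:ℝ)
        = (1 / (m.factorial : ℝ)) * ∑ i ∈ range (m+1), (-1:ℝ)^i * (m.choose i) * h i := by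
      rw [phi_def]
    rw [e1, e2, ← mul_sub, ← Finset.sum_sub_distrib]
    have : ∀ i ∈ range (m+1), (-1:ℝ)^i * (m.choose i) * h i - (-1:ℝ)^i * (m.choose i) * h (i+1)
        = (-1:ℝ)^i * (m.choose i) * (h i - h (i+1)) := by
      intro i _; ring
    rw [Finset.sum_congr rfl this, pascal_regroup m h]
  rw [Finset.sum_congr rfl (fun k _ => step1 k), ← Finset.mul_sum, Finset.sum_comm]
  -- Step 2: compute the inner sums over k
  have hins : Finset.Icc (0:ℤ) (m:ℤ) = insert 0 (Finset.Icc 1 (m:ℤ)) := by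
    ext x
    simp only [Finset.mem_Icc, Finset.mem_insert]
    omega
  have step2 : ∀ i ∈ range (m+2),
      ∑ k ∈ Finset.Icc (0:ℤ) (m:ℤ), (-1:ℝ)^i * ((m+1).choose i) * max ((k:ℝ) - i*a) 0 ^ m
        = ∑ k ∈ (Finset.Icc (1:ℤ) (m:ℤ)).filter (fun k : ℤ => (i:ℝ) * a ≤ (k:ℝ)),
            (-1:ℝ)^i * ((m+1).choose i) * ((k:ℝ) - i*a) ^ m := by
    intro i _
    rw [hins, Finset.sum_insert (by simp)]
    have hzero : (-1:ℝ)^i * ((m+1).choose i) * max (((0:ℤ):ℝ) - i*a) 0 ^ m = 0 := by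
      have : max (((0:ℤ):ℝ) - i*a) 0 = 0 := by
        apply max_eq_right
        simp only [Int.cast_zero, zero_sub, neg_nonpos]
        positivity
      rw [this, zero_pow hm0, mul_zero]
    rw [hzero, zero_add, Finset.sum_filter]
    apply Finset.sum_congr rfl
    intro k _
    rcases le_or_gt ((i:ℝ) * a) (k:ℝ) with hik | hik
    · rw [if_pos hik, max_eq_left (by linarith)]
    · rw [if_neg (not_le.mpr hik), max_eq_right (by linarith), zero_pow hm0, mul_zero]
  rw [Finset.sum_congr rfl step2]
  -- Step 3: match with Wexp
  unfold Wexp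
  have hfac : ((m+1) - 1).factorial = m.factorial := by simp
  have hexp : (m+1) - 1 = m := by omega
  rw [hfac, hexp]
  have hub : ((m+1 : ℕ) : ℤ) - 1 = (m:ℤ) := by push_cast; ring
  rw [hub]
  congr 1
  -- reindex i over ℕ range (m+2) vs ℤ Icc 0 (m+1)
  rw [show ((m+1 : ℕ) : ℤ) = ((m:ℤ) + 1) by push_cast; ring]
  apply Finset.sum_nbij' (fun i : ℕ => (i : ℤ)) (fun i : ℤ => i.toNat)
  · intro i hi
    simp only [Finset.mem_range] at hi
    simp only [Finset.mem_Icc]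
    omega
  · intro i hi
    simp only [Finset.mem_Icc] at hi
    simp only [Finset.mem_range]
    omega
  · intro i hi
    simp
  · intro i hi
    simp only [Finset.mem_Icc] at hi
    omega
  · intro i hi
    apply Finset.sum_congr
    · ext k
      simp [Finset.mem_filter, Int.cast_natCast]
    · intro k hk
      rw [zpow_natCast]
      simp [Int.cast_natCast]


variable (m : ℕ)


lemma coord_continuous (i : Fin (m+1)) :
    Continuous (fun x : EuclideanSpace ℝ (Fin (m+1)) => x i) := by
  have : (fun x : EuclideanSpace ℝ (Fin (m+1)) => x i)
      = (fun f : Fin (m+1) → ℝ => f i) ∘ (WithLp.equiv 2 (Fin (m+1) → ℝ)) := rfl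
  rw [this]
  exact (continuous_apply i).comp (PiLp.continuous_ofLp 2 _)

lemma coord_measurable (i : Fin (m+1)) :
    Measurable (fun x : EuclideanSpace ℝ (Fin (m+1)) => x i) :=
  (coord_continuous m i).measurable

/-- The monotone (sorted) cone. -/
def Mono : Set (EuclideanSpace ℝ (Fin (m+1))) :=
  {x | ∀ i j : Fin (m+1), i ≤ j → x i ≤ x j}

lemma measurable_Mono : MeasurableSet (Mono m) := by
  have : Mono m = ⋂ (i : Fin (m+1)) (j : Fin (m+1)) (_ : i ≤ j),
      {x : EuclideanSpace ℝ (Fin (m+1)) | x i ≤ x j} := by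
    ext x
    simp only [Mono, Set.mem_setOf_eq, Set.mem_iInter]
  rw [this]
  exact MeasurableSet.iInter fun i => MeasurableSet.iInter fun j => MeasurableSet.iInter
    fun _ => measurableSet_le (coord_measurable m i) (coord_measurable m j)

lemma measurable_Inj :
    MeasurableSet {x : EuclideanSpace ℝ (Fin (m+1)) | Function.Injective x} := by
  classical
  have : {x : EuclideanSpace ℝ (Fin (m+1)) | Function.Injective x}
      = ⋂ (i : Fin (m+1)) (j : Fin (m+1)) (_ : i ≠ j),
          {x : EuclideanSpace ℝ (Fin (m+1)) | x i ≠ x j} := by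
    ext x
    simp only [Set.mem_setOf_eq, Set.mem_iInter]
    constructor
    · intro hinj i j hij hxe
      exact hij (hinj hxe)
    · intro h i j hxe
      by_contra hij
      exact h i j hij hxe
  rw [this]
  exact MeasurableSet.iInter fun i => MeasurableSet.iInter fun j => MeasurableSet.iInter
    fun _ => (measurableSet_eq_fun (coord_measurable m i) (coord_measurable m j)).compl

/-- Coordinate permutation as a linear isometry equivalence. -/
noncomputable def Pperm (σ : Equiv.Perm (Fin (m+1))) :
    EuclideanSpace ℝ (Fin (m+1)) ≃ₗᵢ[ℝ] EuclideanSpace ℝ (Fin (m+1)) :=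
  LinearIsometryEquiv.piLpCongrLeft 2 ℝ ℝ σ

lemma Pperm_apply (σ : Equiv.Perm (Fin (m+1))) (x : EuclideanSpace ℝ (Fin (m+1)))
    (i : Fin (m+1)) : Pperm m σ x i = x (σ.symm i) := by
  rw [Pperm, LinearIsometryEquiv.piLpCongrLeft_apply]
  rfl

lemma Pperm_hausdorff (σ : Equiv.Perm (Fin (m+1))) (s : Set (EuclideanSpace ℝ (Fin (m+1)))) :
    μH[(m:ℝ)] (Pperm m σ '' s) = μH[(m:ℝ)] s :=
  (Pperm m σ).isometry.hausdorffMeasure_image (Or.inl (by positivity)) s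

lemma Pperm_measurableEmbedding (σ : Equiv.Perm (Fin (m+1))) :
    MeasurableEmbedding (Pperm m σ) :=
  (Pperm m σ).toHomeomorph.isClosedEmbedding.measurableEmbedding

/-- The key symmetrization lemma. -/
lemma perm_measure (U : Set (EuclideanSpace ℝ (Fin (m+1))))
    (hUmeas : MeasurableSet U)
    (hsym : ∀ (σ : Equiv.Perm (Fin (m+1))) (x : EuclideanSpace ℝ (Fin (m+1))),
      x ∈ U → (WithLp.toLp 2 (fun i => x (σ i)) : EuclideanSpace ℝ (Fin (m+1))) ∈ U)
    (hnull : μH[(m:ℝ)] (U ∩ {x | ¬ Function.Injective x}) = 0) :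
    μH[(m:ℝ)] U = ((m+1).factorial : ℝ≥0∞) * μH[(m:ℝ)] (U ∩ Mono m) := by
  classical
  set T : Set (EuclideanSpace ℝ (Fin (m+1))) := U ∩ Mono m with hT
  set T' : Set (EuclideanSpace ℝ (Fin (m+1))) :=
    T ∩ {x | Function.Injective x} with hT'
  have hTmeas : MeasurableSet T := hUmeas.inter (measurable_Mono m)
  have hT'meas : MeasurableSet T' := hTmeas.inter (measurable_Inj m)
  -- μH T' = μH T
  have hTT' : μH[(m:ℝ)] T' = μH[(m:ℝ)] T := by
    apply le_antisymm (measure_mono Set.inter_subset_left)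
    have hsub : T ⊆ T' ∪ (U ∩ {x | ¬ Function.Injective x}) := by
      intro x hx
      by_cases hinj : Function.Injective x
      · exact Or.inl ⟨hx, hinj⟩
      · exact Or.inr ⟨hx.1, hinj⟩
    calc μH[(m:ℝ)] T ≤ μH[(m:ℝ)] T' + μH[(m:ℝ)] (U ∩ {x | ¬ Function.Injective x}) :=
          le_trans (measure_mono hsub) (measure_union_le _ _)
      _ = μH[(m:ℝ)] T' := by rw [hnull, add_zero]
  -- upper bound
  have hupper : μH[(m:ℝ)] U ≤ ((m+1).factorial : ℝ≥0∞) * μH[(m:ℝ)] T := by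
    have hcover : U ⊆ ⋃ σ ∈ (Finset.univ : Finset (Equiv.Perm (Fin (m+1)))), Pperm m σ '' T := by
      intro x hx
      set τ := Tuple.sort (fun i => x i) with hτ
      have hmono : Monotone ((fun i => x i) ∘ τ) := Tuple.monotone_sort (fun i => x i)
      refine Set.mem_biUnion (Finset.mem_univ τ) ?_
      refine ⟨WithLp.toLp 2 (fun i => x (τ i)), ⟨hsym τ x hx, ?_⟩, ?_⟩
      · intro i j hij
        exact hmono hij
      · ext i
        rw [Pperm_apply]
        show x (τ (τ.symm i)) = x i
        rw [Equiv.apply_symm_apply]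
    calc μH[(m:ℝ)] U ≤ ∑ σ ∈ (Finset.univ : Finset (Equiv.Perm (Fin (m+1)))),
          μH[(m:ℝ)] (Pperm m σ '' T) := le_trans (measure_mono hcover) (measure_biUnion_finset_le _ _)
      _ = ∑ _σ ∈ (Finset.univ : Finset (Equiv.Perm (Fin (m+1)))), μH[(m:ℝ)] T := by
          apply Finset.sum_congr rfl
          intro σ _
          exact Pperm_hausdorff m σ T
      _ = ((m+1).factorial : ℝ≥0∞) * μH[(m:ℝ)] T := by
          rw [Finset.sum_const, Finset.card_univ, Fintype.card_perm, Fintype.card_fin]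
          simp [nsmul_eq_mul]
  -- lower bound
  have hlower : ((m+1).factorial : ℝ≥0∞) * μH[(m:ℝ)] T ≤ μH[(m:ℝ)] U := by
    have hdisj : Set.PairwiseDisjoint
        ↑(Finset.univ : Finset (Equiv.Perm (Fin (m+1)))) (fun σ => Pperm m σ '' T') := by
      intro σ _ τ _ hστ
      rw [Function.onFun, Set.disjoint_left]
      rintro x ⟨y, hy, rfl⟩ ⟨z, hz, hzx⟩
      apply hστ
      have hyx : ∀ j, y j = Pperm m σ y (σ j) := by
        intro j; rw [Pperm_apply, Equiv.symm_apply_apply]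
      have hzx' : ∀ j, z j = Pperm m σ y (τ j) := by
        intro j
        rw [← hzx, Pperm_apply, Equiv.symm_apply_apply]
      have hymono : Monotone ((fun i : Fin (m+1) => Pperm m σ y i) ∘ σ) := by
        intro i j hij
        simp only [Function.comp_apply]
        rw [← hyx, ← hyx]
        exact hy.1.2 i j hij
      have hzmono : Monotone ((fun i : Fin (m+1) => Pperm m σ y i) ∘ τ) := by
        intro i j hij
        simp only [Function.comp_apply]
        rw [← hzx', ← hzx']
        exact hz.1.2 i j hij
      have heq := Tuple.unique_monotone hymono hzmono
      have hxinj : Function.Injective (fun i : Fin (m+1) => Pperm m σ y i) := by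
        have : (fun i : Fin (m+1) => Pperm m σ y i) = y ∘ σ.symm := by
          funext i
          rw [Pperm_apply]
          rfl
        rw [this]
        exact hy.2.comp σ.symm.injective
      apply Equiv.ext
      intro i
      exact hxinj (congrFun heq i)
    have hunion : (⋃ σ ∈ (Finset.univ : Finset (Equiv.Perm (Fin (m+1)))), Pperm m σ '' T') ⊆ U := by
      intro x hx
      rw [Set.mem_iUnion₂] at hx
      obtain ⟨σ, _, y, hy, rfl⟩ := hx
      have : (⇑(Pperm m σ) y : EuclideanSpace ℝ (Fin (m+1))) = WithLp.toLp 2 (fun i => y (σ.symm i)) := by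
        ext i; rw [Pperm_apply]
      rw [this]
      exact hsym σ.symm y hy.1.1
    calc ((m+1).factorial : ℝ≥0∞) * μH[(m:ℝ)] T
        = ∑ _σ ∈ (Finset.univ : Finset (Equiv.Perm (Fin (m+1)))), μH[(m:ℝ)] T' := by
          rw [Finset.sum_const, Finset.card_univ, Fintype.card_perm, Fintype.card_fin, hTT']
          simp [nsmul_eq_mul]
      _ = ∑ σ ∈ (Finset.univ : Finset (Equiv.Perm (Fin (m+1)))),
            μH[(m:ℝ)] (Pperm m σ '' T') := by
          apply Finset.sum_congr rfl
          intro σ _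
          exact (Pperm_hausdorff m σ T').symm
      _ = μH[(m:ℝ)] (⋃ σ ∈ (Finset.univ : Finset (Equiv.Perm (Fin (m+1)))), Pperm m σ '' T') :=
          (measure_biUnion_finset hdisj
            (fun σ _ => (Pperm_measurableEmbedding m σ).measurableSet_image' hT'meas)).symm
      _ ≤ μH[(m:ℝ)] U := measure_mono hunion
  exact le_antisymm hupper hlower


lemma null_level (hm : 1 ≤ m) (f : (Fin m → ℝ) →ₗ[ℝ] ℝ) (hf : f ≠ 0) (r : ℝ) :
    volume {y : Fin m → ℝ | f y = r} = 0 := by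
  have hker : LinearMap.ker f ≠ ⊤ := fun h => hf (LinearMap.ker_eq_top.mp h)
  rcases Classical.em (∃ y₀, f y₀ = r) with ⟨y₀, hy₀⟩ | hno
  · have hset : {y : Fin m → ℝ | f y = r}
        = (fun z => -y₀ + z) ⁻¹' (LinearMap.ker f : Set (Fin m → ℝ)) := by
      ext y
      simp only [Set.mem_setOf_eq, Set.mem_preimage, SetLike.mem_coe, LinearMap.mem_ker]
      rw [show -y₀ + y = y - y₀ by abel, map_sub, hy₀, sub_eq_zero]
    rw [hset, measure_preimage_add]
    exact Measure.addHaar_submodule volume _ hker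
  · rw [show {y : Fin m → ℝ | f y = r} = ∅ from Set.eq_empty_iff_forall_notMem.mpr
      (fun y h => hno ⟨y, h⟩)]
    simp

/-- The sum functional. -/
noncomputable def sumF : (Fin m → ℝ) →ₗ[ℝ] ℝ where
  toFun := fun y => ∑ i, y i
  map_add' := fun y z => Finset.sum_add_distrib
  map_smul' := fun c y => by simp [Finset.mul_sum]

lemma vol_coordEq (hm : 1 ≤ m) (k : ℤ) (i j : Fin (m+1)) (hij : i ≠ j) :
    volume {y : Fin m → ℝ | psi m k y i = psi m k y j} = 0 := by
  classical
  rcases Fin.eq_castSucc_or_eq_last i with ⟨i', rfl⟩ | rfl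
  · rcases Fin.eq_castSucc_or_eq_last j with ⟨j', rfl⟩ | rfl
    · -- both castSucc
      have hij' : i' ≠ j' := fun h => hij (by rw [h])
      set f : (Fin m → ℝ) →ₗ[ℝ] ℝ :=
        (LinearMap.proj i' : (Fin m → ℝ) →ₗ[ℝ] ℝ) -
          (LinearMap.proj j' : (Fin m → ℝ) →ₗ[ℝ] ℝ) with hfdef
      have hf : f ≠ 0 := by
        intro h
        have h1 := LinearMap.congr_fun h (Pi.single i' 1)
        rw [hfdef] at h1
        simp only [LinearMap.sub_apply, LinearMap.proj_apply, LinearMap.zero_apply] at h1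
        rw [Pi.single_eq_same, Pi.single_eq_of_ne hij'.symm] at h1
        norm_num at h1
      have hset : {y : Fin m → ℝ | psi m k y i'.castSucc = psi m k y j'.castSucc}
          = {y : Fin m → ℝ | f y = 0} := by
        ext y
        simp only [Set.mem_setOf_eq, psi_castSucc, hfdef, LinearMap.sub_apply,
          LinearMap.proj_apply, sub_eq_zero]
      rw [hset]
      exact null_level m hm f hf 0
    · -- i = castSucc, j = last
      set f : (Fin m → ℝ) →ₗ[ℝ] ℝ := LinearMap.proj i' + sumF m with hfdef
      have hf : f ≠ 0 := by
        intro h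
        have h1 := LinearMap.congr_fun h (fun _ : Fin m => (1:ℝ))
        have hs : sumF m (fun _ : Fin m => (1:ℝ)) = (m:ℝ) := by
          show ∑ _i : Fin m, (1:ℝ) = (m:ℝ)
          simp
        rw [hfdef] at h1
        simp only [LinearMap.add_apply, LinearMap.proj_apply, LinearMap.zero_apply] at h1
        rw [hs] at h1
        have hm' : (1:ℝ) ≤ (m:ℝ) := by exact_mod_cast hm
        linarith
      have hset : {y : Fin m → ℝ | psi m k y i'.castSucc = psi m k y (Fin.last m)}
          = {y : Fin m → ℝ | f y = (k:ℝ)} := by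
        ext y
        simp only [Set.mem_setOf_eq, psi_castSucc, psi_last, hfdef, LinearMap.add_apply,
          LinearMap.proj_apply]
        have : sumF m y = ∑ l, y l := rfl
        rw [this]
        constructor
        · intro h; linarith
        · intro h; linarith
      rw [hset]
      exact null_level m hm f hf _
  · rcases Fin.eq_castSucc_or_eq_last j with ⟨j', rfl⟩ | rfl
    · set f : (Fin m → ℝ) →ₗ[ℝ] ℝ := LinearMap.proj j' + sumF m with hfdef
      have hf : f ≠ 0 := by
        intro h
        have h1 := LinearMap.congr_fun h (fun _ : Fin m => (1:ℝ))
        have hs : sumF m (fun _ : Fin m => (1:ℝ)) = (m:ℝ) := by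
          show ∑ _i : Fin m, (1:ℝ) = (m:ℝ)
          simp
        rw [hfdef] at h1
        simp only [LinearMap.add_apply, LinearMap.proj_apply, LinearMap.zero_apply] at h1
        rw [hs] at h1
        have hm' : (1:ℝ) ≤ (m:ℝ) := by exact_mod_cast hm
        linarith
      have hset : {y : Fin m → ℝ | psi m k y (Fin.last m) = psi m k y j'.castSucc}
          = {y : Fin m → ℝ | f y = (k:ℝ)} := by
        ext y
        simp only [Set.mem_setOf_eq, psi_castSucc, psi_last, hfdef, LinearMap.add_apply,
          LinearMap.proj_apply]
        have : sumF m y = ∑ l, y l := rfl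
        rw [this]
        constructor
        · intro h; linarith
        · intro h; linarith
      rw [hset]
      exact null_level m hm f hf _
    · exact absurd rfl hij

lemma null_noninj (hm : 1 ≤ m) :
    μH[(m:ℝ)] (SymS m ∩ {x | ¬ Function.Injective x}) = 0 := by
  classical
  have hsub : SymS m ∩ {x | ¬ Function.Injective x}
      ⊆ ⋃ (p : Fin (m+1) × Fin (m+1)) (_ : p.1 ≠ p.2) (k : ℤ),
          psi m k '' {y | y ∈ Abase m k ∧ psi m k y p.1 = psi m k y p.2} := by
    rintro x ⟨hxS, hxno⟩
    simp only [Set.mem_setOf_eq, Function.Injective] at hxno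
    push_neg at hxno
    obtain ⟨u, v, hxy, huv⟩ := hxno
    have hxS' := hxS
    rw [SymS_decomp m hm] at hxS'
    rw [Set.mem_iUnion₂] at hxS'
    obtain ⟨k, hk, y, hy, rfl⟩ := hxS'
    refine Set.mem_iUnion.mpr ⟨(u, v), Set.mem_iUnion.mpr ⟨huv, Set.mem_iUnion.mpr
      ⟨k, ⟨y, ⟨hy, hxy⟩, rfl⟩⟩⟩⟩
  apply measure_mono_null hsub
  apply measure_iUnion_null
  intro p
  apply measure_iUnion_null
  intro hp
  apply measure_iUnion_null
  intro k
  rw [psi_measure]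
  have : volume {y | y ∈ Abase m k ∧ psi m k y p.1 = psi m k y p.2} = 0 :=
    measure_mono_null (fun y hy => hy.2) (vol_coordEq m hm k p.1 p.2 hp)
  rw [this, mul_zero]

lemma measurable_SymS (hm : 1 ≤ m) : MeasurableSet (SymS m) := by
  rw [SymS_decomp m hm]
  exact (Finset.Icc (0:ℤ) (m:ℤ)).measurableSet_biUnion (fun k _ =>
    (psi_measurableEmbedding m k).measurableSet_image' (measurable_Abase m k))

lemma measurable_SymSa (hm : 1 ≤ m) (a : ℝ) (ha0 : 0 ≤ a) (ha1 : a < 1) :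
    MeasurableSet (SymSa m a) := by
  rw [SymSa_decomp m hm a ha0 ha1]
  exact (Finset.Icc (0:ℤ) (m:ℤ)).measurableSet_biUnion (fun k _ =>
    (psi_measurableEmbedding m k).measurableSet_image' (measurable_Abasea m a k))

lemma sym_SymS (σ : Equiv.Perm (Fin (m+1))) (x : EuclideanSpace ℝ (Fin (m+1)))
    (hx : x ∈ SymS m) : (WithLp.toLp 2 (fun i => x (σ i)) : EuclideanSpace ℝ (Fin (m+1))) ∈ SymS m := by
  obtain ⟨hb, z, hz⟩ := hx
  refine ⟨fun i => hb (σ i), z, ?_⟩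
  rw [← hz]
  exact Equiv.sum_comp σ (fun i => x i)

lemma sym_SymSa (a : ℝ) (σ : Equiv.Perm (Fin (m+1))) (x : EuclideanSpace ℝ (Fin (m+1)))
    (hx : x ∈ SymSa m a) : (WithLp.toLp 2 (fun i => x (σ i)) : EuclideanSpace ℝ (Fin (m+1))) ∈ SymSa m a := by
  obtain ⟨hS, hle⟩ := hx
  exact ⟨sym_SymS m σ x hS, fun i => hle (σ i)⟩

lemma SymS_inter_Mono : SymS m ∩ Mono m = Dhat (m+1) := by
  ext x
  simp only [SymS, Mono, Dhat, Set.mem_inter_iff, Set.mem_setOf_eq]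
  tauto

lemma SymSa_inter_Mono (a : ℝ) :
    SymSa m a ∩ Mono m
      = {x : EuclideanSpace ℝ (Fin (m+1)) | (∀ i, 0 ≤ x i ∧ x i < 1) ∧ x (Fin.last m) ≤ a}
          ∩ Dhat (m+1) := by
  ext x
  simp only [SymSa, SymS, Mono, Dhat, Set.mem_inter_iff, Set.mem_setOf_eq]
  constructor
  · rintro ⟨⟨⟨hb, hz⟩, hle⟩, hmono⟩
    exact ⟨⟨hb, hle (Fin.last m)⟩, hb, hmono, hz⟩
  · rintro ⟨⟨hb, hlast⟩, _, hmono, hz⟩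
    exact ⟨⟨⟨hb, hz⟩, fun i => le_trans (hmono i (Fin.last m) (Fin.le_last i)) hlast⟩, hmono⟩

end St2

/-- for `n ≥ 2` and `0 ≤ a < 1`, with `E_a = {x ∈ [0,1)^n : x_n ≤ a}`, the
`(n−1)`-dimensional Hausdorff measure of `E_a ∩ D̂_n` equals `W_a` times that of `D̂_n`. -/
theorem statement2 (n : ℕ) (hn : 2 ≤ n) (a : ℝ) (ha0 : 0 ≤ a) (ha1 : a < 1) :
    μH[(n : ℝ) - 1]
        ({x : EuclideanSpace ℝ (Fin n) | (∀ i, 0 ≤ x i ∧ x i < 1) ∧ x ⟨n - 1, by omega⟩ ≤ a}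
          ∩ Dhat n) =
      ENNReal.ofReal (Wexp n a) * μH[(n : ℝ) - 1] (Dhat n) := by
  obtain ⟨m, rfl⟩ : ∃ m, n = m + 1 := ⟨n - 1, by omega⟩
  have hm : 1 ≤ m := by omega
  have hd : ((m+1 : ℕ) : ℝ) - 1 = (m:ℝ) := by push_cast; ring
  rw [hd]
  have hidx : (⟨m + 1 - 1, by omega⟩ : Fin (m+1)) = Fin.last m := by
    apply Fin.ext
    simp [Fin.last]
  rw [hidx, ← St2.SymSa_inter_Mono m a, ← St2.SymS_inter_Mono m]
  have h1 : μH[(m:ℝ)] (St2.SymS m)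
      = (((m+1).factorial : ℕ) : ℝ≥0∞) * μH[(m:ℝ)] (St2.SymS m ∩ St2.Mono m) :=
    St2.perm_measure m _ (St2.measurable_SymS m hm) (St2.sym_SymS m) (St2.null_noninj m hm)
  have h2 : μH[(m:ℝ)] (St2.SymSa m a)
      = (((m+1).factorial : ℕ) : ℝ≥0∞) * μH[(m:ℝ)] (St2.SymSa m a ∩ St2.Mono m) :=
    St2.perm_measure m _ (St2.measurable_SymSa m hm a ha0 ha1) (St2.sym_SymSa m a)
      (measure_mono_null (by
        rintro x ⟨⟨hxS, _⟩, hni⟩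
        exact ⟨hxS, hni⟩) (St2.null_noninj m hm))
  rw [St2.measure_SymS m hm] at h1
  rw [St2.measure_SymSa m hm a ha0 ha1, St2.sum_phi_eq_Wexp m hm a ha0] at h2
  have hfac0 : (((m+1).factorial : ℕ) : ℝ≥0∞) ≠ 0 := by
    simp [Nat.factorial_ne_zero]
  have hfact : (((m+1).factorial : ℕ) : ℝ≥0∞) ≠ ⊤ := ENNReal.natCast_ne_top _
  apply (ENNReal.mul_right_inj hfac0 hfact).mp
  rw [← h2]
  rw [show (((m+1).factorial : ℕ) : ℝ≥0∞) *
        (ENNReal.ofReal (Wexp (m+1) a) * μH[(m:ℝ)] (St2.SymS m ∩ St2.Mono m))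
      = ENNReal.ofReal (Wexp (m+1) a) *
        ((((m+1).factorial : ℕ) : ℝ≥0∞) * μH[(m:ℝ)] (St2.SymS m ∩ St2.Mono m)) by ring]
  rw [← h1, mul_comm]
end

section
/- For every integer n ≥ 2 and every real number a with 0 ≤ a < 1, one has the identity (1/(n−1)!) · Σ_{(i,k) ∈ ℤ², 0 ≤ i ≤ n, max(i·a, 1) ≤ k ≤ n−1} (−1)^i · C(n,i) · (k − i·a)^{n−1} = V^{1−a}, where V^b := (1/(n−1)!) · Σ_{(i,k) ∈ ℤ², 2 ≤ i ≤ n, max(i·b, i−n+1) ≤ k ≤ i−1} (−1)^{n+i} · C(n,i) · (k − i·b)^{n−1}. -/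
open Finset

open Polynomial

open scoped fwdDiff


lemma natDegree_shift_sub_lt (p : ℝ[X]) (hp : p ≠ 0) (h0 : p.natDegree ≠ 0) :
    (p.comp (X + 1) - p).natDegree < p.natDegree := by
  have hX1 : ((X : ℝ[X]) + 1).natDegree = 1 := by
    simpa using Polynomial.natDegree_X_add_C (1 : ℝ)
  have hdeg : (p.comp (X + 1)).natDegree = p.natDegree := by
    rw [Polynomial.natDegree_comp, hX1, mul_one]
  have hcompne : p.comp (X + 1) ≠ 0 := by
    intro h
    exact h0 (by rw [← hdeg, h]; simp)
  have hdeg' : (p.comp (X + 1)).degree = p.degree := by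
    rw [Polynomial.degree_eq_natDegree hcompne, Polynomial.degree_eq_natDegree hp, hdeg]
  have hlc : (p.comp (X + 1)).leadingCoeff = p.leadingCoeff := by
    rw [Polynomial.leadingCoeff_comp (by rw [hX1]; norm_num)]
    have h1 : ((X : ℝ[X]) + 1).leadingCoeff = 1 := by
      simpa using Polynomial.leadingCoeff_X_add_C (1 : ℝ)
    rw [h1, one_pow, mul_one]
  have hlt := Polynomial.degree_sub_lt hdeg' hcompne hlc
  rw [hdeg'] at hlt
  by_cases hq : p.comp (X + 1) - p = 0
  · rw [hq]; simpa using Nat.pos_of_ne_zero h0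
  · exact Polynomial.natDegree_lt_natDegree hq hlt

lemma fwdDiff_eval (p : ℝ[X]) :
    Δ_[(1:ℝ)] (fun x => p.eval x) = fun x => (p.comp (X + 1) - p).eval x := by
  funext x
  simp [fwdDiff, Polynomial.eval_comp]

lemma fwdDiff_iter_eval_eq_zero :
    ∀ (n : ℕ) (p : ℝ[X]), p.natDegree < n → (Δ_[(1:ℝ)])^[n] (fun x => p.eval x) = 0 := by
  intro n
  induction n with
  | zero => intro p hp; exact absurd hp (Nat.not_lt_zero _)
  | succ n ih =>
    intro p hp
    rw [Function.iterate_succ_apply, fwdDiff_eval]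
    by_cases h0 : p.natDegree = 0
    · obtain ⟨c, rfl⟩ := Polynomial.natDegree_eq_zero.mp h0
      have h1 : (C c).comp (X + 1) - C c = 0 := by simp
      rw [h1]
      have h2 : (fun x => Polynomial.eval x (0 : ℝ[X])) = (0 : ℝ → ℝ) := by
        funext x; simp
      have hfix : Δ_[(1:ℝ)] (0 : ℝ → ℝ) = 0 := by
        funext x; simp [fwdDiff]
      rw [h2, Function.iterate_fixed hfix]
    · by_cases hp0 : p = 0
      · simp [hp0] at h0
      · exact ih _ ((natDegree_shift_sub_lt p hp0 h0).trans_le (Nat.lt_succ_iff.mp hp))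

lemma sumzero (n : ℕ) (p : ℝ[X]) (hp : p.natDegree < n) :
    ∑ i ∈ range (n + 1), (-1 : ℝ) ^ i * (n.choose i : ℝ) * p.eval (i : ℝ) = 0 := by
  have h := fwdDiff_iter_eq_sum_shift (1 : ℝ) (fun x => p.eval x) n 0
  rw [fwdDiff_iter_eval_eq_zero n p hp] at h
  push_cast [zsmul_eq_mul] at h
  simp only [Pi.zero_apply, zero_add, smul_eq_mul, nsmul_eq_mul, mul_one] at h
  have h' : (0 : ℝ) = ∑ k ∈ range (n + 1),
      (-1 : ℝ) ^ (n - k) * (n.choose k : ℝ) * p.eval (k : ℝ) := by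
    rw [← h]
  have h2 := congrArg (fun x => (-1 : ℝ) ^ n * x) h'
  simp only [mul_zero, Finset.mul_sum] at h2
  rw [h2]
  apply Finset.sum_congr rfl
  intro k hk
  have hkn : k ≤ n := Nat.lt_succ_iff.mp (Finset.mem_range.mp hk)
  have hpow : (-1 : ℝ) ^ n * (-1 : ℝ) ^ (n - k) = (-1 : ℝ) ^ k := by
    rw [← pow_add]
    have he : n + (n - k) = 2 * (n - k) + k := by omega
    rw [he, pow_add, pow_mul]
    norm_num
  calc (-1 : ℝ) ^ k * (n.choose k : ℝ) * p.eval (k : ℝ)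
      = ((-1 : ℝ) ^ n * (-1 : ℝ) ^ (n - k)) * (n.choose k : ℝ) * p.eval (k : ℝ) := by rw [hpow]
    _ = (-1 : ℝ) ^ n * ((-1 : ℝ) ^ (n - k) * (n.choose k : ℝ) * p.eval (k : ℝ)) := by ring

lemma zero_inner (n : ℕ) (hn : 1 ≤ n) (a : ℝ) (k : ℤ) :
    ∑ i ∈ Finset.Icc (0:ℤ) (n:ℤ),
      (-1:ℝ)^i * (n.choose i.toNat : ℝ) * ((k:ℝ) - (i:ℝ)*a)^(n-1) = 0 := by
  set p : ℝ[X] := (Polynomial.C (k:ℝ) - Polynomial.C a * Polynomial.X)^(n-1) with hpdef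
  have hdeg : p.natDegree < n := by
    have h1 : (Polynomial.C (k:ℝ) - Polynomial.C a * Polynomial.X).natDegree ≤ 1 := by
      apply le_trans (Polynomial.natDegree_sub_le _ _)
      simp only [Polynomial.natDegree_C, max_le_iff]
      exact ⟨Nat.zero_le _, le_trans (Polynomial.natDegree_C_mul_le _ _) (by simp)⟩
    calc p.natDegree ≤ (n-1) * (Polynomial.C (k:ℝ) - Polynomial.C a * Polynomial.X).natDegree :=
          Polynomial.natDegree_pow_le
      _ ≤ (n-1) * 1 := Nat.mul_le_mul_left _ h1
      _ < n := by omega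
  have h := sumzero n p hdeg
  rw [← h]
  apply Finset.sum_nbij' (fun x : ℤ => x.toNat) (fun m : ℕ => (m : ℤ))
  · intro x hx
    simp only [Finset.mem_Icc] at hx
    simp only [Finset.mem_range]
    omega
  · intro m hm
    simp only [Finset.mem_range] at hm
    simp only [Finset.mem_Icc]
    omega
  · intro x hx
    simp only [Finset.mem_Icc] at hx
    omega
  · intro m hm
    simp [Int.toNat_natCast]
  · intro x hx
    simp only [Finset.mem_Icc] at hx
    have hx0 : x = (x.toNat : ℤ) := (Int.toNat_of_nonneg hx.1).symm
    have hz : (-1:ℝ)^x = (-1:ℝ)^(x.toNat) := by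
      conv_lhs => rw [hx0]
      exact zpow_natCast _ _
    have hxr : (x:ℝ) = (x.toNat : ℝ) := by exact_mod_cast hx0
    rw [hz, hxr, hpdef]
    simp only [Polynomial.eval_pow, Polynomial.eval_sub, Polynomial.eval_C,
      Polynomial.eval_mul, Polynomial.eval_X]
    ring_nf

noncomputable def Vexp (n : ℕ) (b : ℝ) : ℝ :=
  (1 / ((n - 1).factorial : ℝ)) *
    ∑ i ∈ Finset.Icc (2 : ℤ) (n : ℤ),
      ∑ k ∈ (Finset.Icc (i - (n : ℤ) + 1) (i - 1)).filter (fun k : ℤ => (i : ℝ) * b ≤ (k : ℝ)),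
        (-1 : ℝ) ^ ((n : ℤ) + i) * (n.choose i.toNat : ℝ) * ((k : ℝ) - (i : ℝ) * b) ^ (n - 1)

/-- for `n ≥ 2` and `0 ≤ a < 1`,
`(1/(n−1)!) Σ_{0 ≤ i ≤ n, max(i·a,1) ≤ k ≤ n−1} (−1)^i C(n,i) (k − i·a)^{n−1} = V^{1−a}`. -/
theorem statement3 (n : ℕ) (hn : 2 ≤ n) (a : ℝ) (ha0 : 0 ≤ a) (ha1 : a < 1) :
    (1 / ((n - 1).factorial : ℝ)) *
        ∑ i ∈ Finset.Icc (0 : ℤ) (n : ℤ),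
          ∑ k ∈ (Finset.Icc (1 : ℤ) ((n : ℤ) - 1)).filter (fun k : ℤ => (i : ℝ) * a ≤ (k : ℝ)),
            (-1 : ℝ) ^ i * (n.choose i.toNat : ℝ) * ((k : ℝ) - (i : ℝ) * a) ^ (n - 1) =
      Vexp n (1 - a) := by
  classical
  set f : ℤ → ℤ → ℝ :=
    fun i k => (-1 : ℝ) ^ i * (n.choose i.toNat : ℝ) * ((k : ℝ) - (i : ℝ) * a) ^ (n - 1) with hf
  -- Step 1: rewrite Vexp via k ↦ i - k
  have hV : Vexp n (1 - a) = (1 / ((n - 1).factorial : ℝ)) *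
      ∑ i ∈ Finset.Icc (2 : ℤ) (n : ℤ),
        ∑ k ∈ (Finset.Icc (1 : ℤ) ((n : ℤ) - 1)).filter (fun k : ℤ => (k : ℝ) ≤ (i : ℝ) * a),
          -f i k := by
    rw [Vexp]
    congr 1
    apply Finset.sum_congr rfl
    intro i hi
    simp only [Finset.mem_Icc] at hi
    apply Finset.sum_nbij' (fun k : ℤ => i - k) (fun k : ℤ => i - k)
    · intro k hk
      simp only [Finset.mem_filter, Finset.mem_Icc] at hk ⊢
      refine ⟨⟨by omega, by omega⟩, ?_⟩
      have := hk.2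
      push_cast
      push_cast at this
      nlinarith
    · intro k hk
      simp only [Finset.mem_filter, Finset.mem_Icc] at hk ⊢
      refine ⟨⟨by omega, by omega⟩, ?_⟩
      have := hk.2
      push_cast
      push_cast at this
      nlinarith
    · intro k _; ring
    · intro k _; ring
    · intro k hk
      simp only [Finset.mem_filter, Finset.mem_Icc] at hk
      have hcast : ((i - k : ℤ) : ℝ) = (i : ℝ) - (k : ℝ) := by push_cast; ring
      rw [hf]
      simp only [hcast]
      have hneg : ((i:ℝ) - (k:ℝ) - (i:ℝ) * a) = -((k:ℝ) - (i:ℝ) * (1 - a)) := by ring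
      rw [hneg, neg_pow]
      have hz1 : (-1:ℝ)^((n:ℤ) + i) = (-1:ℝ)^(n:ℤ) * (-1:ℝ)^i := by
        rw [zpow_add₀ (by norm_num : (-1:ℝ) ≠ 0)]
      have hz2 : (-1:ℝ)^((n:ℤ)) = (-1:ℝ)^n := zpow_natCast _ _
      have hz3 : (-1:ℝ)^n = -(-1:ℝ)^(n-1) := by
        conv_lhs => rw [show n = (n - 1) + 1 by omega]
        rw [pow_succ]; ring
      rw [hz1, hz2, hz3]
      ring
  rw [hV]
  congr 1
  -- Step 2: the two double sums are equal
  set g : ℤ → ℝ := fun i =>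
    ∑ k ∈ (Finset.Icc (1 : ℤ) ((n : ℤ) - 1)).filter (fun k : ℤ => (i : ℝ) * a ≤ (k : ℝ)), f i k
    with hg
  -- total sum over full rectangle is zero
  have hT : ∑ i ∈ Finset.Icc (0:ℤ) (n:ℤ), ∑ k ∈ Finset.Icc (1:ℤ) ((n:ℤ)-1), f i k = 0 := by
    rw [Finset.sum_comm]
    apply Finset.sum_eq_zero
    intro k _
    exact zero_inner n (by omega) a k
  -- split the index set
  have hsplit : Finset.Icc (0:ℤ) (n:ℤ) = Finset.Icc (0:ℤ) 1 ∪ Finset.Icc (2:ℤ) (n:ℤ) := by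
    ext x; simp only [Finset.mem_Icc, Finset.mem_union]; omega
  have hdisj : Disjoint (Finset.Icc (0:ℤ) 1) (Finset.Icc (2:ℤ) (n:ℤ)) := by
    rw [Finset.disjoint_left]
    intro x hx hx'
    simp only [Finset.mem_Icc] at hx hx'
    omega
  -- for i ∈ [0,1] the filter is trivial
  have hlow : ∀ i ∈ Finset.Icc (0:ℤ) 1,
      (∑ k ∈ (Finset.Icc (1 : ℤ) ((n : ℤ) - 1)).filter (fun k : ℤ => (i : ℝ) * a ≤ (k : ℝ)), f i k)
        = ∑ k ∈ Finset.Icc (1:ℤ) ((n:ℤ)-1), f i k := by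
    intro i hi
    simp only [Finset.mem_Icc] at hi
    rw [Finset.filter_true_of_mem]
    intro k hk
    simp only [Finset.mem_Icc] at hk
    have hk1 : (1:ℝ) ≤ (k:ℝ) := by exact_mod_cast hk.1
    have hi1 : (i:ℝ) ≤ 1 := by exact_mod_cast hi.2
    have hi0 : (0:ℝ) ≤ (i:ℝ) := by exact_mod_cast hi.1
    nlinarith
  -- for i ∈ [2,n] the two filtered sums combine to the full sum
  have hhigh : ∀ i ∈ Finset.Icc (2:ℤ) (n:ℤ),
      (∑ k ∈ (Finset.Icc (1 : ℤ) ((n : ℤ) - 1)).filter (fun k : ℤ => (i : ℝ) * a ≤ (k : ℝ)), f i k)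
      + (∑ k ∈ (Finset.Icc (1 : ℤ) ((n : ℤ) - 1)).filter (fun k : ℤ => (k : ℝ) ≤ (i : ℝ) * a), f i k)
        = ∑ k ∈ Finset.Icc (1:ℤ) ((n:ℤ)-1), f i k := by
    intro i _
    have he : (∑ k ∈ (Finset.Icc (1 : ℤ) ((n : ℤ) - 1)).filter (fun k : ℤ => (k : ℝ) ≤ (i : ℝ) * a), f i k)
        = ∑ k ∈ (Finset.Icc (1 : ℤ) ((n : ℤ) - 1)).filter (fun k : ℤ => ¬ ((i : ℝ) * a ≤ (k : ℝ))), f i k := by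
      symm
      apply Finset.sum_subset
      · intro x hx
        simp only [Finset.mem_filter] at hx ⊢
        exact ⟨hx.1, le_of_lt (lt_of_not_ge hx.2)⟩
      · intro x hx hx'
        simp only [Finset.mem_filter, not_and, not_not] at hx hx'
        have h1 : (x:ℝ) ≤ (i:ℝ) * a := hx.2
        have h2 : (i:ℝ) * a ≤ (x:ℝ) := hx' hx.1
        have h3 : (x:ℝ) - (i:ℝ) * a = 0 := by linarith
        rw [hf]
        simp only [h3]
        rw [zero_pow (by omega : n - 1 ≠ 0)]
        ring
    rw [he, Finset.sum_filter_add_sum_filter_not]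
  calc ∑ i ∈ Finset.Icc (0:ℤ) (n:ℤ), g i
      = ∑ i ∈ Finset.Icc (0:ℤ) 1, g i + ∑ i ∈ Finset.Icc (2:ℤ) (n:ℤ), g i := by
        rw [hsplit, Finset.sum_union hdisj]
    _ = ∑ i ∈ Finset.Icc (2 : ℤ) (n : ℤ),
          ∑ k ∈ (Finset.Icc (1 : ℤ) ((n : ℤ) - 1)).filter (fun k : ℤ => (k : ℝ) ≤ (i : ℝ) * a),
            -f i k := by
        have expand : ∑ i ∈ Finset.Icc (0:ℤ) 1, g i + ∑ i ∈ Finset.Icc (2:ℤ) (n:ℤ), g i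
            + ∑ i ∈ Finset.Icc (2 : ℤ) (n : ℤ),
              ∑ k ∈ (Finset.Icc (1 : ℤ) ((n : ℤ) - 1)).filter (fun k : ℤ => (k : ℝ) ≤ (i : ℝ) * a),
                f i k = 0 := by
          rw [← hT, hsplit, Finset.sum_union hdisj]
          rw [Finset.sum_congr rfl hlow]
          rw [add_assoc, ← Finset.sum_add_distrib]
          rw [Finset.sum_congr rfl hhigh]
        have hneg : ∑ i ∈ Finset.Icc (2 : ℤ) (n : ℤ),
              ∑ k ∈ (Finset.Icc (1 : ℤ) ((n : ℤ) - 1)).filter (fun k : ℤ => (k : ℝ) ≤ (i : ℝ) * a),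
                -f i k
            = -∑ i ∈ Finset.Icc (2 : ℤ) (n : ℤ),
              ∑ k ∈ (Finset.Icc (1 : ℤ) ((n : ℤ) - 1)).filter (fun k : ℤ => (k : ℝ) ≤ (i : ℝ) * a),
                f i k := by
          rw [← Finset.sum_neg_distrib]
          apply Finset.sum_congr rfl
          intro i _
          rw [Finset.sum_neg_distrib]
        rw [hneg]
        linarith
end

section
/- For every integer n ≥ 2 and every real number a with 0 ≤ a < 1, one has the identity (1−a)^{n−1} · Σ_{k=1}^{n−1} ( U_{n−1}((k − n·a)/(1−a)) − U_{n−1}((k − n·a)/(1−a) − 1) ) = (1/(n−1)!) · Σ_{(i,k) ∈ ℤ², 2 ≤ i ≤ n, max(i·a, i−n+1) ≤ k ≤ i−1} (−1)^{n+i} · C(n,i) · (k − i·a)^{n−1}. -/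
open Finset

/-- `U_m(x) = (1/m!) · Σ_{i=0}^{m} (−1)^i C(m,i) max(x − i, 0)^m`. -/
noncomputable def Ufun (m : ℕ) (x : ℝ) : ℝ :=
  (1 / (m.factorial : ℝ)) *
    ∑ i ∈ Finset.range (m + 1), (-1 : ℝ) ^ i * (m.choose i : ℝ) * max (x - (i : ℝ)) 0 ^ m

private lemma key_sum (m : ℕ) (g : ℕ → ℝ) :
    ∑ j ∈ Finset.range (m + 2), (-1 : ℝ) ^ j * (((m + 1).choose j : ℕ) : ℝ) * g j
      = ∑ i ∈ Finset.range (m + 1), (-1 : ℝ) ^ i * ((m.choose i : ℕ) : ℝ) * g i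
        - ∑ i ∈ Finset.range (m + 1), (-1 : ℝ) ^ i * ((m.choose i : ℕ) : ℝ) * g (i + 1) := by
  have h1 : ∑ j ∈ Finset.range (m + 2), (-1 : ℝ) ^ j * (((m + 1).choose j : ℕ) : ℝ) * g j
      = (∑ j ∈ Finset.range (m + 1),
          (-1 : ℝ) ^ (j + 1) * (((m + 1).choose (j + 1) : ℕ) : ℝ) * g (j + 1)) + g 0 := by
    rw [Finset.sum_range_succ']; simp
  have h2 : ∑ i ∈ Finset.range (m + 1), (-1 : ℝ) ^ i * ((m.choose i : ℕ) : ℝ) * g i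
      = (∑ i ∈ Finset.range m,
          (-1 : ℝ) ^ (i + 1) * ((m.choose (i + 1) : ℕ) : ℝ) * g (i + 1)) + g 0 := by
    rw [Finset.sum_range_succ']; simp
  have h3 : ∑ i ∈ Finset.range m, (-1 : ℝ) ^ (i + 1) * ((m.choose (i + 1) : ℕ) : ℝ) * g (i + 1)
      = ∑ i ∈ Finset.range (m + 1), (-1 : ℝ) ^ (i + 1) * ((m.choose (i + 1) : ℕ) : ℝ) * g (i + 1) := by
    rw [Finset.sum_range_succ]; simp
  have h4 : ∑ j ∈ Finset.range (m + 1),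
        (-1 : ℝ) ^ (j + 1) * (((m + 1).choose (j + 1) : ℕ) : ℝ) * g (j + 1)
      = ∑ j ∈ Finset.range (m + 1),
          ((-1 : ℝ) ^ (j + 1) * ((m.choose (j + 1) : ℕ) : ℝ) * g (j + 1)
            - (-1 : ℝ) ^ j * ((m.choose j : ℕ) : ℝ) * g (j + 1)) := by
    apply Finset.sum_congr rfl; intro j _
    rw [Nat.choose_succ_succ]; push_cast; ring
  rw [h1, h2, h3, h4, Finset.sum_sub_distrib]
  ring

private lemma diffU (m : ℕ) (x : ℝ) :
    Ufun m x - Ufun m (x - 1)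
      = (1 / (m.factorial : ℝ)) * ∑ j ∈ Finset.range (m + 2),
          (-1 : ℝ) ^ j * (((m + 1).choose j : ℕ) : ℝ) * max (x - (j : ℝ)) 0 ^ m := by
  unfold Ufun
  rw [← mul_sub, key_sum m (fun j => max (x - (j : ℝ)) 0 ^ m)]
  congr 1
  congr 1
  apply Finset.sum_congr rfl
  intro i _
  have h : x - 1 - (i : ℝ) = x - ((i : ℝ) + 1) := by ring
  simp [h]

private lemma lhs_eq (m : ℕ) (a : ℝ) (ha1 : a < 1) :
    (1 - a) ^ (m + 1) *
        ∑ k ∈ Finset.Icc 1 (m + 1),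
          (Ufun (m + 1) (((k : ℝ) - ((m + 2 : ℕ) : ℝ) * a) / (1 - a)) -
            Ufun (m + 1) (((k : ℝ) - ((m + 2 : ℕ) : ℝ) * a) / (1 - a) - 1))
      = (1 / ((m + 1).factorial : ℝ)) *
          ∑ j ∈ Finset.range (m + 3), ∑ k ∈ Finset.Icc 1 (m + 1),
            (-1 : ℝ) ^ j * (((m + 2).choose j : ℕ) : ℝ) *
              max ((k : ℝ) - (j : ℝ) - a * (((m + 2 : ℕ) : ℝ) - (j : ℝ))) 0 ^ (m + 1) := by
  have h1a : (0 : ℝ) < 1 - a := by linarith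
  rw [Finset.mul_sum]
  have step : ∀ k ∈ Finset.Icc 1 (m + 1),
      (1 - a) ^ (m + 1) *
          (Ufun (m + 1) (((k : ℝ) - ((m + 2 : ℕ) : ℝ) * a) / (1 - a)) -
            Ufun (m + 1) (((k : ℝ) - ((m + 2 : ℕ) : ℝ) * a) / (1 - a) - 1))
        = (1 / ((m + 1).factorial : ℝ)) * ∑ j ∈ Finset.range (m + 3),
            (-1 : ℝ) ^ j * (((m + 2).choose j : ℕ) : ℝ) *
              max ((k : ℝ) - (j : ℝ) - a * (((m + 2 : ℕ) : ℝ) - (j : ℝ))) 0 ^ (m + 1) := by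
    intro k _
    set X : ℝ := ((k : ℝ) - ((m + 2 : ℕ) : ℝ) * a) / (1 - a) with hX
    rw [diffU (m + 1) X, mul_left_comm]
    congr 1
    rw [Finset.mul_sum]
    apply Finset.sum_congr rfl
    intro j _
    have harg : (k : ℝ) - (j : ℝ) - a * (((m + 2 : ℕ) : ℝ) - (j : ℝ))
        = (1 - a) * (X - (j : ℝ)) := by
      rw [hX]
      field_simp
      ring
    have hmax : max ((1 - a) * (X - (j : ℝ))) 0 = (1 - a) * max (X - (j : ℝ)) 0 := by
      rw [mul_max_of_nonneg _ _ h1a.le, mul_zero]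
    rw [harg, hmax, mul_pow]
    ring
  rw [Finset.sum_congr rfl step, ← Finset.mul_sum, Finset.sum_comm]

private lemma neg_one_pow_parity {a b : ℕ} (h : a % 2 = b % 2) : (-1:ℝ)^a = (-1:ℝ)^b := by
  conv_lhs => rw [← Nat.div_add_mod a 2]
  conv_rhs => rw [← Nat.div_add_mod b 2]
  rw [pow_add, pow_add, pow_mul, pow_mul, h]
  norm_num

private lemma inner_eq (m : ℕ) (a : ℝ) (i : ℤ) (hi0 : 0 ≤ i) (hi2 : i ≤ (m:ℤ)+2) :
    ∑ k ∈ Finset.Icc (i - ((m+2:ℕ):ℤ) + 1) (i - 1),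
        (-1:ℝ)^(((m+2:ℕ):ℤ)+i) * (((m+2).choose i.toNat : ℕ) : ℝ) *
          max ((k:ℝ) - (i:ℝ)*a) 0 ^ (m+1)
      = ∑ k ∈ Finset.Icc 1 (m+1),
          (-1:ℝ)^((((m+2:ℕ):ℤ) - i).toNat) *
            (((m+2).choose ((((m+2:ℕ):ℤ) - i).toNat) : ℕ) : ℝ) *
            max ((k:ℝ) - (((((m+2:ℕ):ℤ) - i).toNat : ℕ):ℝ)
              - a*(((m+2:ℕ):ℝ) - (((((m+2:ℕ):ℤ) - i).toNat : ℕ):ℝ))) 0 ^ (m+1) := by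
  set p : ℕ := i.toNat with hp
  have hpi : (p:ℤ) = i := Int.toNat_of_nonneg hi0
  have hq : (((m+2:ℕ):ℤ) - i).toNat = m + 2 - p := by omega
  have hple : p ≤ m + 2 := by omega
  rw [hq]
  have hsign : (-1:ℝ)^(((m+2:ℕ):ℤ)+i) = (-1:ℝ)^(m+2-p) := by
    have h1 : ((m+2:ℕ):ℤ) + i = ((m+2+p : ℕ) : ℤ) := by omega
    rw [h1, zpow_natCast]
    exact neg_one_pow_parity (by omega)
  have hch : (m+2).choose p = (m+2).choose (m+2-p) := (Nat.choose_symm hple).symm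
  rw [hsign, hch]
  apply Finset.sum_nbij' (i := fun k : ℤ => (k - i + ((m+2:ℕ):ℤ)).toNat)
    (j := fun k : ℕ => (k : ℤ) + i - ((m+2:ℕ):ℤ))
  · intro k hk
    simp only [Finset.mem_Icc] at hk ⊢
    omega
  · intro k hk
    simp only [Finset.mem_Icc] at hk ⊢
    omega
  · intro k hk
    simp only [Finset.mem_Icc] at hk
    omega
  · intro k hk
    simp only [Finset.mem_Icc] at hk
    omega
  · intro k hk
    simp only [Finset.mem_Icc] at hk
    congr 2
    have hkn : ((k - i + ((m+2:ℕ):ℤ)).toNat : ℤ) = k - i + ((m+2:ℕ):ℤ) := by omega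
    have hknr : ((k - i + ((m+2:ℕ):ℤ)).toNat : ℝ) = (k:ℝ) - (i:ℝ) + ((m+2:ℕ):ℝ) := by
      exact_mod_cast congrArg (fun z : ℤ => (z : ℝ)) hkn
    have hqr : ((m+2-p : ℕ) : ℝ) = ((m+2:ℕ):ℝ) - (i:ℝ) := by
      have : ((m+2-p : ℕ) : ℤ) = ((m+2:ℕ):ℤ) - i := by omega
      exact_mod_cast congrArg (fun z : ℤ => (z : ℝ)) this
    rw [hknr, hqr]
    ring_nf

private lemma rhs_eq (m : ℕ) (a : ℝ) (ha0 : 0 ≤ a) :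
    ∑ i ∈ Finset.Icc (2:ℤ) ((m+2:ℕ):ℤ),
        ∑ k ∈ (Finset.Icc (i - ((m+2:ℕ):ℤ) + 1) (i - 1)).filter
            (fun k : ℤ => (i:ℝ) * a ≤ (k:ℝ)),
          (-1:ℝ)^(((m+2:ℕ):ℤ)+i) * (((m+2).choose i.toNat : ℕ) : ℝ) *
            ((k:ℝ) - (i:ℝ)*a) ^ (m+1)
      = ∑ j ∈ Finset.range (m+3), ∑ k ∈ Finset.Icc 1 (m+1),
          (-1:ℝ)^j * (((m+2).choose j : ℕ) : ℝ) *
            max ((k:ℝ) - (j:ℝ) - a*(((m+2:ℕ):ℝ) - (j:ℝ))) 0 ^ (m+1) := by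
  -- step 1: filter → max
  have step1 : ∀ i : ℤ,
      ∑ k ∈ (Finset.Icc (i - ((m+2:ℕ):ℤ) + 1) (i - 1)).filter
            (fun k : ℤ => (i:ℝ) * a ≤ (k:ℝ)),
          (-1:ℝ)^(((m+2:ℕ):ℤ)+i) * (((m+2).choose i.toNat : ℕ) : ℝ) *
            ((k:ℝ) - (i:ℝ)*a) ^ (m+1)
        = ∑ k ∈ Finset.Icc (i - ((m+2:ℕ):ℤ) + 1) (i - 1),
            (-1:ℝ)^(((m+2:ℕ):ℤ)+i) * (((m+2).choose i.toNat : ℕ) : ℝ) *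
              max ((k:ℝ) - (i:ℝ)*a) 0 ^ (m+1) := by
    intro i
    rw [Finset.sum_filter]
    apply Finset.sum_congr rfl
    intro k _
    by_cases h : (i:ℝ) * a ≤ (k:ℝ)
    · rw [if_pos h, max_eq_left (by linarith)]
    · rw [if_neg h]
      push_neg at h
      rw [max_eq_right (by linarith), zero_pow (by omega), mul_zero]
  simp only [step1]
  -- step 2: extend Icc 2 (m+2) to Icc 0 (m+2)
  rw [show ∑ i ∈ Finset.Icc (2:ℤ) ((m+2:ℕ):ℤ),
        ∑ k ∈ Finset.Icc (i - ((m+2:ℕ):ℤ) + 1) (i - 1),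
          (-1:ℝ)^(((m+2:ℕ):ℤ)+i) * (((m+2).choose i.toNat : ℕ) : ℝ) *
            max ((k:ℝ) - (i:ℝ)*a) 0 ^ (m+1)
      = ∑ i ∈ Finset.Icc (0:ℤ) ((m+2:ℕ):ℤ),
        ∑ k ∈ Finset.Icc (i - ((m+2:ℕ):ℤ) + 1) (i - 1),
          (-1:ℝ)^(((m+2:ℕ):ℤ)+i) * (((m+2).choose i.toNat : ℕ) : ℝ) *
            max ((k:ℝ) - (i:ℝ)*a) 0 ^ (m+1) from ?_]
  · -- step 3: reindex outer sum
    apply Finset.sum_nbij' (i := fun i : ℤ => (((m+2:ℕ):ℤ) - i).toNat)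
      (j := fun j : ℕ => ((m+2:ℕ):ℤ) - (j : ℤ))
    · intro i hi
      simp only [Finset.mem_Icc, Finset.mem_range] at hi ⊢
      omega
    · intro j hj
      simp only [Finset.mem_Icc, Finset.mem_range] at hj ⊢
      omega
    · intro i hi
      simp only [Finset.mem_Icc] at hi
      omega
    · intro j hj
      simp only [Finset.mem_range] at hj
      omega
    · intro i hi
      simp only [Finset.mem_Icc] at hi
      exact inner_eq m a i hi.1 (by omega)
  · apply Finset.sum_subset ?_ ?_
    · intro i hi
      simp only [Finset.mem_Icc] at hi ⊢
      omega
    · intro i hi hni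
      simp only [Finset.mem_Icc] at hi hni
      have : i = 0 ∨ i = 1 := by omega
      apply Finset.sum_eq_zero
      intro k hk
      simp only [Finset.mem_Icc] at hk
      rcases this with h0 | h1
      · subst h0
        have hk0 : (k:ℝ) ≤ -1 := by exact_mod_cast (by omega : k ≤ (-1:ℤ))
        rw [max_eq_right (by norm_num; linarith), zero_pow (by omega), mul_zero]
      · subst h1
        have hk0 : (k:ℝ) ≤ 0 := by exact_mod_cast (by omega : k ≤ (0:ℤ))
        rw [max_eq_right (by push_cast; nlinarith), zero_pow (by omega), mul_zero]

/-- for `n ≥ 2` and `0 ≤ a < 1`,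
`(1−a)^{n−1} Σ_{k=1}^{n−1} (U_{n−1}((k−na)/(1−a)) − U_{n−1}((k−na)/(1−a) − 1))`
equals `(1/(n−1)!) Σ_{2 ≤ i ≤ n, max(ia, i−n+1) ≤ k ≤ i−1} (−1)^{n+i} C(n,i) (k−ia)^{n−1}`. -/
theorem statement5 (n : ℕ) (hn : 2 ≤ n) (a : ℝ) (ha0 : 0 ≤ a) (ha1 : a < 1) :
    (1 - a) ^ (n - 1) *
        ∑ k ∈ Finset.Icc 1 (n - 1),
          (Ufun (n - 1) (((k : ℝ) - n * a) / (1 - a)) -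
            Ufun (n - 1) (((k : ℝ) - n * a) / (1 - a) - 1)) =
      (1 / ((n - 1).factorial : ℝ)) *
        ∑ i ∈ Finset.Icc (2 : ℤ) (n : ℤ),
          ∑ k ∈ (Finset.Icc (i - (n : ℤ) + 1) (i - 1)).filter
              (fun k : ℤ => (i : ℝ) * a ≤ (k : ℝ)),
            (-1 : ℝ) ^ ((n : ℤ) + i) * (n.choose i.toNat : ℝ) *
              ((k : ℝ) - (i : ℝ) * a) ^ (n - 1) := by
  obtain ⟨m, rfl⟩ : ∃ m, n = m + 2 := ⟨n - 2, by omega⟩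
  simp only [show m + 2 - 1 = m + 1 from rfl]
  rw [lhs_eq m a ha1, rhs_eq m a ha0]
end
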